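/- arXiv:0908.2853 — 6 statements merged into one kernel-verified Lean document; each statement's English description precedes it below -/
import Mathlib

section
/- Let f : F_p^n → F_p with bias(f) = δ. Then for at least a δ²/2 fraction of directions y ∈ F_p^n, the discrete derivative Δ_y(f) satisfies bias(Δ_y f) ≥ δ²/2. -/
open Finset
open scoped Classical

/-- The bias of a function `f : F_p^n → F_p`:
`bias f = |E_{a ∈ F_p^n} [ω^{f(a)}]|` where `ω = e^{2πi/p}`. -/
noncomputable def bias {p n : ℕ} [NeZero p] (f : (Fin n → ZMod p) → ZMod p) : ℝ :=
  ‖(∑ x : Fin n → ZMod p,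
    Complex.exp (2 * Real.pi * Complex.I * ((f x).val : ℂ) / (p : ℂ))) / ((p : ℂ) ^ n)‖

noncomputable def psi {p : ℕ} [NeZero p] (a : ZMod p) : ℂ :=
  Complex.exp (2 * Real.pi * Complex.I * ((a.val : ℕ) : ℂ) / (p : ℂ))

lemma psi_eq {p : ℕ} [NeZero p] (a : ZMod p) :
    psi a = Complex.exp (((2 * Real.pi * a.val / p : ℝ) : ℂ) * Complex.I) := by
  unfold psi
  congr 1
  push_cast
  ring

lemma psi_abs {p : ℕ} [NeZero p] (a : ZMod p) : ‖psi a‖ = 1 := by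
  rw [psi_eq]; exact Complex.norm_exp_ofReal_mul_I _

lemma psi_ne_zero {p : ℕ} [NeZero p] (a : ZMod p) : psi a ≠ 0 := by
  intro h
  have := psi_abs a
  rw [h] at this; simp at this

lemma psi_mul {p : ℕ} [NeZero p] (a b : ZMod p) : psi a * psi b = psi (a + b) := by
  have hp : (p : ℂ) ≠ 0 := by
    exact_mod_cast Nat.cast_ne_zero.mpr (NeZero.ne p)
  unfold psi
  rw [← Complex.exp_add]
  have hval : a.val + b.val = (a + b).val + p * ((a.val + b.val) / p) := by
    rw [ZMod.val_add]
    exact (Nat.mod_add_div _ _).symm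
  have : 2 * ↑Real.pi * Complex.I * ↑(a.val) / ↑p + 2 * ↑Real.pi * Complex.I * ↑(b.val) / ↑p
      = 2 * ↑Real.pi * Complex.I * ↑((a + b).val) / ↑p
        + ((a.val + b.val) / p : ℕ) * (2 * ↑Real.pi * Complex.I) := by
    have hc : ((a.val : ℂ) + b.val) = ((a + b).val : ℂ) + p * ((a.val + b.val) / p : ℕ) := by
      exact_mod_cast congrArg (Nat.cast : ℕ → ℂ) hval
    have hpc : (p : ℂ) * (2 * Real.pi * Complex.I / p) = 2 * Real.pi * Complex.I := by
      field_simp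
    linear_combination (2 * ↑Real.pi * Complex.I / (p : ℂ)) * hc
      + (((a.val + b.val) / p : ℕ) : ℂ) * hpc
  rw [this, Complex.exp_add]
  have h1 : Complex.exp ((((a.val + b.val) / p : ℕ) : ℂ) * (2 * ↑Real.pi * Complex.I)) = 1 := by
    have := Complex.exp_int_mul_two_pi_mul_I ((a.val + b.val) / p : ℕ)
    simpa using this
  rw [h1, mul_one]

lemma psi_zero {p : ℕ} [NeZero p] : psi (0 : ZMod p) = 1 := by
  unfold psi
  simp

lemma psi_conj {p : ℕ} [NeZero p] (a : ZMod p) :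
    (starRingEnd ℂ) (psi a) = psi (-a) := by
  have h1 : psi a * (starRingEnd ℂ) (psi a) = 1 := by
    rw [Complex.mul_conj]
    rw [Complex.normSq_eq_norm_sq, psi_abs]
    norm_num
  have h2 : psi a * psi (-a) = 1 := by
    rw [psi_mul]; simp [psi_zero]
  exact mul_left_cancel₀ (psi_ne_zero a) (h1.trans h2.symm)

lemma bias_eq {p n : ℕ} [NeZero p] (f : (Fin n → ZMod p) → ZMod p) :
    bias f = ‖∑ x : Fin n → ZMod p, psi (f x)‖ / (p : ℝ) ^ n := by
  unfold bias psi
  rw [norm_div]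
  congr 1
  rw [norm_pow]
  simp [Complex.norm_natCast]

lemma bias_nonneg {p n : ℕ} [NeZero p] (f : (Fin n → ZMod p) → ZMod p) :
    0 ≤ bias f := by
  unfold bias; positivity

lemma bias_le_one {p n : ℕ} [NeZero p] (f : (Fin n → ZMod p) → ZMod p) :
    bias f ≤ 1 := by
  rw [bias_eq]
  have hN : (0:ℝ) < (p:ℝ)^n := by
    have : 0 < p := Nat.pos_of_ne_zero (NeZero.ne p)
    positivity
  rw [div_le_one hN]
  calc ‖∑ x : Fin n → ZMod p, psi (f x)‖
      ≤ ∑ x : Fin n → ZMod p, ‖psi (f x)‖ := by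
        exact norm_sum_le _ _
    _ = (p : ℝ) ^ n := by
        simp [psi_abs, Finset.card_univ]

/-- If `bias f = δ`, then for at least a `δ²/2` fraction of the directions `y`,
the derivative `Δ_y f` satisfies `bias (Δ_y f) ≥ δ²/2`. -/
theorem stmt_1 {p n : ℕ} [Fact p.Prime] (f : (Fin n → ZMod p) → ZMod p) (δ : ℝ)
    (hδ : bias f = δ) :
    (δ ^ 2 / 2) * (p : ℝ) ^ n ≤
      ((Finset.univ.filter fun y : Fin n → ZMod p =>
        δ ^ 2 / 2 ≤ bias (fun x => f (x + y) - f x)).card : ℝ) := by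
  haveI : NeZero p := ⟨(Fact.out : p.Prime).ne_zero⟩
  set N : ℝ := (p : ℝ) ^ n with hNdef
  have hN : (0:ℝ) < N := by
    have : 0 < p := Nat.pos_of_ne_zero (NeZero.ne p)
    positivity
  set S : ℂ := ∑ x : Fin n → ZMod p, psi (f x) with hSdef
  have hδ0 : 0 ≤ δ := hδ ▸ bias_nonneg f
  have habsS : ‖S‖ = δ * N := by
    have := (bias_eq f).symm.trans hδ
    field_simp at this
    rw [← this]
    rw [hNdef, div_mul_cancel₀ _ (by positivity)]
  set T : (Fin n → ZMod p) → ℂ := fun y => ∑ x : Fin n → ZMod p, psi (f (x + y) - f x)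
    with hTdef
  -- S * conj S = ∑_y T y
  have hSS : S * (starRingEnd ℂ) S = ∑ y : Fin n → ZMod p, T y := by
    have inner : ∀ j : Fin n → ZMod p,
        (∑ i : Fin n → ZMod p, psi (f i) * (starRingEnd ℂ) (psi (f j)))
          = ∑ y : Fin n → ZMod p, psi (f (j + y) - f j) := by
      intro j
      rw [← Equiv.sum_comp (Equiv.addLeft j)
        (fun i => psi (f i) * (starRingEnd ℂ) (psi (f j)))]
      apply Finset.sum_congr rfl
      intro y _
      simp only [Equiv.coe_addLeft]
      rw [psi_conj, psi_mul, ← sub_eq_add_neg]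
    calc S * (starRingEnd ℂ) S
        = ∑ i : Fin n → ZMod p, ∑ j : Fin n → ZMod p,
            psi (f i) * (starRingEnd ℂ) (psi (f j)) := by
          rw [hSdef, map_sum, Finset.sum_mul_sum]
      _ = ∑ j : Fin n → ZMod p, ∑ i : Fin n → ZMod p,
            psi (f i) * (starRingEnd ℂ) (psi (f j)) := Finset.sum_comm
      _ = ∑ j : Fin n → ZMod p, ∑ y : Fin n → ZMod p, psi (f (j + y) - f j) := by
          exact Finset.sum_congr rfl fun j _ => inner j
      _ = ∑ y : Fin n → ZMod p, T y := Finset.sum_comm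
  have key : δ ^ 2 * N ^ 2 ≤ ∑ y : Fin n → ZMod p, ‖T y‖ := by
    have h1 : δ ^ 2 * N ^ 2 = (S * (starRingEnd ℂ) S).re := by
      rw [Complex.mul_conj, Complex.normSq_eq_norm_sq, habsS, Complex.ofReal_re]
      ring
    rw [h1, hSS, Complex.re_sum]
    apply Finset.sum_le_sum
    intro y _
    exact Complex.re_le_norm _
  -- bias of derivative
  have hbias : ∀ y : Fin n → ZMod p,
      bias (fun x => f (x + y) - f x) = ‖T y‖ / N := fun y => bias_eq _
  have key2 : δ ^ 2 * N ≤ ∑ y : Fin n → ZMod p, bias (fun x => f (x + y) - f x) := by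
    have : ∑ y : Fin n → ZMod p, bias (fun x => f (x + y) - f x)
        = (∑ y : Fin n → ZMod p, ‖T y‖) / N := by
      rw [Finset.sum_div]
      exact Finset.sum_congr rfl fun y _ => hbias y
    rw [this, le_div_iff₀ hN]
    calc δ ^ 2 * N * N = δ ^ 2 * N ^ 2 := by ring
      _ ≤ _ := key
  -- split the sum
  set G := Finset.univ.filter fun y : Fin n → ZMod p =>
    δ ^ 2 / 2 ≤ bias (fun x => f (x + y) - f x) with hGdef
  have hsplit : ∑ y : Fin n → ZMod p, bias (fun x => f (x + y) - f x)
      ≤ (G.card : ℝ) + δ ^ 2 / 2 * N := by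
    rw [← Finset.sum_filter_add_sum_filter_not Finset.univ
      (fun y : Fin n → ZMod p => δ ^ 2 / 2 ≤ bias (fun x => f (x + y) - f x))]
    gcongr ?_ + ?_
    · calc ∑ y ∈ G, bias (fun x => f (x + y) - f x)
          ≤ ∑ _y ∈ G, (1:ℝ) := Finset.sum_le_sum fun y _ => bias_le_one _
        _ = (G.card : ℝ) := by simp
    · calc ∑ y ∈ Finset.univ.filter fun y : Fin n → ZMod p =>
            ¬ (δ ^ 2 / 2 ≤ bias (fun x => f (x + y) - f x)),
            bias (fun x => f (x + y) - f x)
          ≤ ∑ _y ∈ Finset.univ.filter fun y : Fin n → ZMod p =>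
            ¬ (δ ^ 2 / 2 ≤ bias (fun x => f (x + y) - f x)), (δ ^ 2 / 2) := by
            apply Finset.sum_le_sum
            intro y hy
            rw [Finset.mem_filter] at hy
            exact le_of_not_ge hy.2
        _ ≤ δ ^ 2 / 2 * N := by
            rw [Finset.sum_const, nsmul_eq_mul]
            have hc : ((Finset.univ.filter fun y : Fin n → ZMod p =>
                  ¬ (δ ^ 2 / 2 ≤ bias (fun x => f (x + y) - f x))).card : ℝ) ≤ N := by
              calc ((Finset.univ.filter fun y : Fin n → ZMod p =>
                  ¬ (δ ^ 2 / 2 ≤ bias (fun x => f (x + y) - f x))).card : ℝ)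
                  ≤ ((Finset.univ : Finset (Fin n → ZMod p)).card : ℝ) := by
                    exact_mod_cast Finset.card_le_card (Finset.filter_subset _ _)
                _ = N := by simp [hNdef, Finset.card_univ]
            have h0 : (0:ℝ) ≤ δ ^ 2 / 2 := by positivity
            nlinarith
  have := key2.trans hsplit
  linarith
end

section
/- Let F : V → ℝ≥0 be a subadditive function on a linear subspace V ⊆ F^n, meaning F(αu + v) ≤ F(u) + F(v) for all u,v ∈ V and α ∈ F. Let A_r = {x ∈ V : F(x) ≤ r}. If |A_r| ≥ μ|V|, then there exists a subspace W ⊆ V of codimension O(log(1/μ)) such that F(y) = O(r·log(1/μ)) for every y ∈ W. -/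
open Finset

section Aux

variable {p : ℕ} [Fact p.Prime] {M : Type*} [AddCommGroup M] [Module (ZMod p) M] [Fintype M]
  [DecidableEq M]

open scoped Classical in
/-- The set of `x` such that `F(x+k) ≤ r` for some `k ∈ K`. -/
noncomputable def levelSet (F : M → ℝ) (r : ℝ) (K : Submodule (ZMod p) M) : Finset M :=
  Finset.univ.filter (fun x => ∃ k ∈ K, F (x + k) ≤ r)

lemma mem_levelSet {F : M → ℝ} {r : ℝ} {K : Submodule (ZMod p) M} {x : M} :
    x ∈ levelSet F r K ↔ ∃ k ∈ K, F (x + k) ≤ r := by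
  simp [levelSet]

/-- Almost-period calculus for translates. -/
lemma sdiff_translate_card (P : Finset M) (a b : M) :
    (P \ P.image (· + (a + b))).card ≤
      (P \ P.image (· + a)).card + (P \ P.image (· + b)).card := by
  have himg : (P.image (· + a)).image (· + b) = P.image (· + (a + b)) := by
    rw [Finset.image_image]
    apply Finset.image_congr
    intro x _
    simp [Function.comp, add_assoc]
  have hsub : P \ P.image (· + (a + b)) ⊆
      (P \ P.image (· + b)) ∪ (P.image (· + b) \ P.image (· + (a + b))) := by
    intro x hx
    rw [Finset.mem_sdiff] at hx
    by_cases hb : x ∈ P.image (· + b)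
    · exact Finset.mem_union_right _ (Finset.mem_sdiff.mpr ⟨hb, hx.2⟩)
    · exact Finset.mem_union_left _ (Finset.mem_sdiff.mpr ⟨hx.1, hb⟩)
  have h2 : (P.image (· + b) \ P.image (· + (a + b))).card = (P \ P.image (· + a)).card := by
    rw [← himg, ← Finset.image_sdiff _ _ (add_left_injective b),
      Finset.card_image_of_injective _ (add_left_injective b)]
  calc (P \ P.image (· + (a + b))).card
      ≤ ((P \ P.image (· + b)) ∪ (P.image (· + b) \ P.image (· + (a + b)))).card :=
        Finset.card_le_card hsub
    _ ≤ (P \ P.image (· + b)).card + (P.image (· + b) \ P.image (· + (a + b))).card :=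
        Finset.card_union_le _ _
    _ = (P \ P.image (· + a)).card + (P \ P.image (· + b)).card := by rw [h2]; ring

/-- Main iteration. -/
lemma iter (F : M → ℝ) (r μ : ℝ)
    (hF0 : ∀ x, 0 ≤ F x)
    (hsub : ∀ u v : M, ∀ α : ZMod p, F (α • u + v) ≤ F u + F v)
    (hr : 0 ≤ r) (hμ : 0 < μ) :
    ∀ (N : ℕ) (K : Submodule (ZMod p) M) (t : ℕ),
      (∀ k ∈ K, F k ≤ 2*r + 4*r*t) →
      (μ * (Fintype.card M) * (5/4)^t ≤ ((levelSet F r K).card : ℝ)) →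
      (Fintype.card M ≤ (levelSet F r K).card + N) →
      ∃ (W : Submodule (ZMod p) M) (t' : ℕ),
        μ * (5/4:ℝ)^t' ≤ 1 ∧
        μ * (Fintype.card M) ≤ (Nat.card W : ℝ) ∧
        ∀ w ∈ W, F w ≤ 4*r + 4*r*t' := by
  intro N
  induction N using Nat.strong_induction_on with
  | _ N ih =>
  intro K t hK hinv hN
  set P : Finset M := levelSet F r K with hP
  -- positivity facts
  have hcardM : (0:ℝ) < Fintype.card M := by
    exact_mod_cast Fintype.card_pos
  have hPpos : (0:ℝ) < P.card := by
    refine lt_of_lt_of_le ?_ hinv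
    positivity
  have hPposn : 0 < P.card := by exact_mod_cast hPpos
  have hPne : P.Nonempty := Finset.card_pos.mp hPposn
  by_cases hA : ∃ x ∈ P, ∃ y ∈ P, P.card ≤ 4 * ((P \ P.image (· + (x - y))).card)
  · -- Case A : density increment
    obtain ⟨x, hx, y, hy, hgrow⟩ := hA
    obtain ⟨kx, hkxK, hkx⟩ := mem_levelSet.mp hx
    obtain ⟨ky, hkyK, hky⟩ := mem_levelSet.mp hy
    set u : M := x - y with hu
    set ub : M := (x + kx) - (y + ky) with hub
    have hFub : F ub ≤ 2*r := by
      have h1 : (-1 : ZMod p) • (y + ky) + (x + kx) = ub := by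
        rw [neg_one_smul (ZMod p)]; rw [hub]; abel
      have := hsub (y + ky) (x + kx) (-1)
      rw [h1] at this
      linarith
    set K' : Submodule (ZMod p) M := K ⊔ Submodule.span (ZMod p) {ub} with hK'
    have hKle : K ≤ K' := le_sup_left
    have hubK' : ub ∈ K' := Submodule.mem_sup_right (Submodule.mem_span_singleton_self ub)
    -- bound on K'
    have hK'bound : ∀ k ∈ K', F k ≤ 2*r + 4*r*(((t+1 : ℕ)) : ℝ) := by
      intro k hk
      rcases Submodule.mem_sup.mp hk with ⟨k₀, hk₀, z, hz, rfl⟩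
      rcases Submodule.mem_span_singleton.mp hz with ⟨β, rfl⟩
      have h1 : F (β • ub + k₀) ≤ F ub + F k₀ := hsub ub k₀ β
      have h2 : F k₀ ≤ 2*r + 4*r*t := hK k₀ hk₀
      have h3 : k₀ + β • ub = β • ub + k₀ := add_comm _ _
      rw [h3]
      push_cast
      linarith
    -- the new level set contains P and P + u
    set P' : Finset M := levelSet F r K' with hP'
    have hPsub : P ⊆ P' := by
      intro z hz
      rcases mem_levelSet.mp hz with ⟨k, hkK, hk⟩
      exact mem_levelSet.mpr ⟨k, hKle hkK, hk⟩
    have hQsub : P.image (· + u) ⊆ P' := by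
      intro z hz
      rcases Finset.mem_image.mp hz with ⟨w, hw, rfl⟩
      rcases mem_levelSet.mp hw with ⟨kw, hkwK, hkw⟩
      refine mem_levelSet.mpr ⟨(kw + kx - ky) + (-ub), ?_, ?_⟩
      · exact K'.add_mem (hKle (K.sub_mem (K.add_mem hkwK hkxK) hkyK)) (K'.neg_mem hubK')
      · have : w + u + ((kw + kx - ky) + -ub) = w + kw := by
          rw [hu, hub]; abel
        rw [this]
        exact hkw
    -- cardinality growth
    set Q : Finset M := P.image (· + u) with hQdef
    have hQcard : Q.card = P.card := Finset.card_image_of_injective _ (add_left_injective u)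
    have hunion : (P \ Q).card + P.card = (P ∪ Q).card := by
      rw [← hQcard]; exact Finset.card_sdiff_add_card P Q
    have hP'card : (P \ Q).card + P.card ≤ P'.card := by
      rw [hunion]
      exact Finset.card_le_card (Finset.union_subset hPsub hQsub)
    have hD1 : 1 ≤ (P \ Q).card := by
      by_contra hcon
      push_neg at hcon
      interval_cases h : (P \ Q).card <;> omega
    -- new invariant
    have hinv' : μ * (Fintype.card M) * (5/4)^(t+1) ≤ (P'.card : ℝ) := by
      have h4 : (P.card : ℝ) ≤ 4 * ((P \ Q).card : ℝ) := by exact_mod_cast hgrow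
      have h5 : ((P \ Q).card : ℝ) + P.card ≤ (P'.card : ℝ) := by exact_mod_cast hP'card
      have h6 : μ * (Fintype.card M) * (5/4)^t ≤ (P.card : ℝ) := hinv
      have h7 : (0:ℝ) ≤ μ * (Fintype.card M) * (5/4)^t := by positivity
      calc μ * (Fintype.card M) * (5/4)^(t+1)
          = (μ * (Fintype.card M) * (5/4)^t) * (5/4) := by ring
        _ ≤ (P.card : ℝ) * (5/4) := by nlinarith
        _ = (P.card : ℝ) + (P.card : ℝ)/4 := by ring
        _ ≤ (P.card : ℝ) + ((P \ Q).card : ℝ) := by linarith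
        _ ≤ (P'.card : ℝ) := by linarith
    -- measure decreases
    have hNpos : 1 ≤ N := by
      have := Finset.card_le_univ P'
      omega
    have hN' : Fintype.card M ≤ P'.card + (N - 1) := by
      have := Finset.card_le_univ P'
      omega
    have := ih (N - 1) (by omega) K' (t+1) hK'bound hinv' hN'
    exact this
  · -- Case B : all differences are almost-periods; P - P is a subgroup
    push_neg at hA
    obtain ⟨x₀, hx₀⟩ := hPne
    have hkey : ∀ z1 z2 : M,
        (∃ x ∈ P, ∃ y ∈ P, x - y = z1) → (∃ x ∈ P, ∃ y ∈ P, x - y = z2) →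
        (∃ x ∈ P, ∃ y ∈ P, x - y = z1 + z2) := by
      rintro z1 z2 ⟨x1, hx1, y1, hy1, rfl⟩ ⟨x2, hx2, y2, hy2, rfl⟩
      have h1 := hA x1 hx1 y1 hy1
      have h2 := hA x2 hx2 y2 hy2
      have h3 := sdiff_translate_card P (x1 - y1) (x2 - y2)
      have h4 : (P \ P.image (· + ((x1 - y1) + (x2 - y2)))).card < P.card := by omega
      have h5 : ¬ Disjoint P (P.image (· + ((x1 - y1) + (x2 - y2)))) := by
        intro hdis
        have heq := Finset.sdiff_eq_self_iff_disjoint.mpr hdis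
        rw [heq] at h4
        omega
      rw [Finset.not_disjoint_iff] at h5
      obtain ⟨w, hwP, hwQ⟩ := h5
      rcases Finset.mem_image.mp hwQ with ⟨w', hw', hww'⟩
      refine ⟨w, hwP, w', hw', ?_⟩
      rw [← hww']; abel
    set H : AddSubgroup M :=
      { carrier := {z : M | ∃ x ∈ P, ∃ y ∈ P, x - y = z}
        add_mem' := fun {z1} {z2} h1 h2 => hkey z1 z2 h1 h2
        zero_mem' := ⟨x₀, hx₀, x₀, hx₀, sub_self x₀⟩
        neg_mem' := by
          rintro z ⟨x, hx, y, hy, rfl⟩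
          exact ⟨y, hy, x, hx, by abel⟩ } with hH
    set W : Submodule (ZMod p) M := (AddSubgroup.toZModSubmodule p H) ⊔ K with hW
    haveI : Fintype ↥W := Fintype.ofFinite _
    refine ⟨W, t, ?_, ?_, ?_⟩
    · -- μ * (5/4)^t ≤ 1
      have h1 : (P.card : ℝ) ≤ Fintype.card M := by
        exact_mod_cast Finset.card_le_univ P
      have h2 : μ * (Fintype.card M) * (5/4)^t ≤ Fintype.card M := le_trans hinv h1
      have hmm : (μ * (5/4:ℝ)^t) * (Fintype.card M) ≤ 1 * (Fintype.card M) := by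
        rw [one_mul]
        calc (μ * (5/4:ℝ)^t) * (Fintype.card M) = μ * (Fintype.card M) * (5/4)^t := by ring
          _ ≤ (Fintype.card M : ℝ) := h2
      exact le_of_mul_le_mul_right hmm hcardM
    · -- μ * card M ≤ Nat.card W
      have hinj : P.card ≤ Nat.card W := by
        rw [Nat.card_eq_fintype_card]
        have f : ∀ x ∈ P, x - x₀ ∈ W := by
          intro x hx
          apply Submodule.mem_sup_left
          exact (AddSubgroup.mem_toZModSubmodule p).mpr ⟨x, hx, x₀, hx₀, rfl⟩
        have : Fintype.card ↥P ≤ Fintype.card W := by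
          apply Fintype.card_le_of_injective (fun x => ⟨x.1 - x₀, f x.1 x.2⟩)
          intro a b hab
          have := congrArg Subtype.val hab
          simp only at this
          exact Subtype.ext (sub_left_inj.mp this)
        rwa [Fintype.card_coe] at this
      have h1 : μ * (Fintype.card M) ≤ μ * (Fintype.card M) * (5/4)^t := by
        have h15 : (1:ℝ) ≤ (5/4)^t := one_le_pow₀ (by norm_num)
        exact le_mul_of_one_le_right (by positivity) h15
      have h2 : (P.card : ℝ) ≤ (Nat.card W : ℝ) := by exact_mod_cast hinj
      linarith
    · -- F bounded on W
      intro w hw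
      rcases Submodule.mem_sup.mp hw with ⟨h, hh, k, hkK, rfl⟩
      rcases (AddSubgroup.mem_toZModSubmodule p).mp hh with ⟨x, hx, y, hy, rfl⟩
      rcases mem_levelSet.mp hx with ⟨kx, hkxK, hkx⟩
      rcases mem_levelSet.mp hy with ⟨ky, hkyK, hky⟩
      have hk'' : k - kx + ky ∈ K := K.add_mem (K.sub_mem hkK hkxK) hkyK
      have hFk'' : F (k - kx + ky) ≤ 2*r + 4*r*t := hK _ hk''
      -- (x - y) + k = (-1) • (y + ky) + ((1 : ZMod p) • (k - kx + ky) + (x + kx))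
      have e1 : (1 : ZMod p) • (k - kx + ky) + (x + kx) = (k - kx + ky) + (x + kx) := by
        rw [one_smul]
      have hstep1 : F ((k - kx + ky) + (x + kx)) ≤ F (k - kx + ky) + F (x + kx) := by
        rw [← e1]; exact hsub _ _ 1
      have e2 : (-1 : ZMod p) • (y + ky) + ((k - kx + ky) + (x + kx)) = (x - y) + k := by
        rw [neg_one_smul (ZMod p)]; abel
      have hstep2 : F ((x - y) + k) ≤ F (y + ky) + F ((k - kx + ky) + (x + kx)) := by
        rw [← e2]; exact hsub _ _ (-1)
      linarith

end Aux

set_option maxHeartbeats 1000000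

/-- Subadditive functions on a subspace: if the set `A_r = {x ∈ V : 𝓕(x) ≤ r}` has
density at least `μ` in `V`, then there is a subspace `W ≤ V` of codimension
`O(log(1/μ))` on which `𝓕 = O(r·log(1/μ))`; the constants depend only on `|F| = p`. -/
theorem stmt_4 (p : ℕ) [Fact p.Prime] :
    ∃ C : ℝ, 0 < C ∧
      ∀ (n : ℕ) (V : Submodule (ZMod p) (Fin n → ZMod p)) (F : V → ℝ) (r μ : ℝ),
        (∀ x : V, 0 ≤ F x) →
        (∀ (u v : V) (α : ZMod p), F (α • u + v) ≤ F u + F v) →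
        0 ≤ r → 0 < μ → μ ≤ 1 →
        μ * Nat.card V ≤ Nat.card {x : V // F x ≤ r} →
        ∃ W : Submodule (ZMod p) (Fin n → ZMod p), W ≤ V ∧
          (Module.finrank (ZMod p) V : ℝ) ≤
            Module.finrank (ZMod p) W + C * (Real.log (1 / μ) + 1) ∧
          ∀ y : V, (y : Fin n → ZMod p) ∈ W → F y ≤ C * r * (Real.log (1 / μ) + 1) := by
  classical
  refine ⟨100, by norm_num, ?_⟩
  intro n V F r μ hF0 hsub hr hμ hμ1 hdens
  haveI : Fintype ↥V := Fintype.ofFinite _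
  -- basic log facts
  have hinvμ : (1:ℝ) ≤ 1/μ := by
    rw [le_div_iff₀ hμ]; linarith
  have hlogμ : 0 ≤ Real.log (1/μ) := Real.log_nonneg hinvμ
  -- level set at ⊥ is the subtype set
  have hbot : (levelSet F r (⊥ : Submodule (ZMod p) ↥V)).card = Nat.card {x : V // F x ≤ r} := by
    rw [Nat.card_eq_fintype_card, Fintype.card_subtype]
    congr 1
    apply Finset.filter_congr
    intro x _
    simp [levelSet, Submodule.mem_bot]
  -- find an element with F a ≤ r, bound F 0
  have hcardV : (0:ℝ) < Nat.card ↥V := by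
    have : 0 < Nat.card ↥V := Nat.card_pos
    exact_mod_cast this
  have hsubpos : 0 < Nat.card {x : V // F x ≤ r} := by
    have : (0:ℝ) < Nat.card {x : V // F x ≤ r} := lt_of_lt_of_le (by positivity) hdens
    exact_mod_cast this
  obtain ⟨⟨a, ha⟩⟩ := (Nat.card_pos_iff.mp hsubpos).1
  have hF0r : F 0 ≤ 2 * r := by
    have h := hsub a a (-1)
    have e : (-1 : ZMod p) • a + a = 0 := by
      rw [neg_one_smul (ZMod p) a]; abel
    rw [e] at h
    linarith
  -- apply the iteration
  have hKbot : ∀ k ∈ (⊥ : Submodule (ZMod p) ↥V), F k ≤ 2*r + 4*r*(0:ℕ) := by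
    intro k hk
    rw [Submodule.mem_bot] at hk
    subst hk
    push_cast
    linarith
  have hinv0 : μ * (Fintype.card ↥V) * (5/4)^(0:ℕ)
      ≤ (((levelSet F r (⊥ : Submodule (ZMod p) ↥V)).card : ℕ) : ℝ) := by
    rw [pow_zero, mul_one, hbot]
    rw [← Nat.card_eq_fintype_card]
    exact hdens
  have hmeas : Fintype.card ↥V ≤ (levelSet F r (⊥ : Submodule (ZMod p) ↥V)).card
      + Fintype.card ↥V := Nat.le_add_left _ _
  obtain ⟨W', t', h1, h2, h3⟩ :=
    iter F r μ hF0 hsub hr hμ (Fintype.card ↥V) (⊥ : Submodule (ZMod p) ↥V) 0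
      hKbot hinv0 hmeas
  haveI : Fintype ↥W' := Fintype.ofFinite _
  refine ⟨W'.map V.subtype, Submodule.map_subtype_le V W', ?_, ?_⟩
  · -- rank inequality
    have hrankW : Module.finrank (ZMod p) ↥(W'.map V.subtype) = Module.finrank (ZMod p) ↥W' :=
      Submodule.finrank_map_subtype_eq V W'
    rw [hrankW]
    set dV := Module.finrank (ZMod p) ↥V with hdV
    set dW := Module.finrank (ZMod p) ↥W' with hdW
    have hcV : Fintype.card ↥V = p ^ dV := by
      rw [Module.card_eq_pow_finrank (K := ZMod p), ZMod.card]
    have hcW : Nat.card ↥W' = p ^ dW := by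
      rw [Nat.card_eq_fintype_card, Module.card_eq_pow_finrank (K := ZMod p), ZMod.card]
    rcases le_or_gt dV dW with hle | hlt
    · have : (dV:ℝ) ≤ dW := by exact_mod_cast hle
      nlinarith [hlogμ]
    · -- dW < dV
      have hp2 : (2:ℝ) ≤ (p:ℝ) := by
        exact_mod_cast (Fact.out : p.Prime).two_le
      set e := dV - dW with he
      have hdVe : dV = dW + e := by omega
      have hppos : (0:ℝ) < (p:ℝ) := by linarith
      have hμpe : μ * ((p:ℝ))^e ≤ 1 := by
        have h2' : μ * ((p:ℝ))^dV ≤ ((p:ℝ))^dW := by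
          have := h2
          rw [hcV, hcW] at this
          push_cast at this
          exact this
        have hsplit : ((p:ℝ))^dV = ((p:ℝ))^dW * ((p:ℝ))^e := by
          rw [hdVe, pow_add]
        rw [hsplit] at h2'
        have hpW : (0:ℝ) < ((p:ℝ))^dW := by positivity
        have hh : (μ * ((p:ℝ))^e) * ((p:ℝ))^dW ≤ 1 * ((p:ℝ))^dW := by
          rw [one_mul]
          calc (μ * ((p:ℝ))^e) * ((p:ℝ))^dW = μ * (((p:ℝ))^dW * ((p:ℝ))^e) := by ring
            _ ≤ ((p:ℝ))^dW := h2'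
        exact le_of_mul_le_mul_right hh hpW
      have h2e : (2:ℝ)^e ≤ 1/μ := by
        have := pow_le_pow_left₀ (by norm_num : (0:ℝ) ≤ 2) hp2 e
        rw [le_div_iff₀ hμ]
        calc (2:ℝ)^e * μ ≤ ((p:ℝ))^e * μ := by nlinarith
          _ ≤ 1 := by nlinarith
      have hloge : (e:ℝ) * Real.log 2 ≤ Real.log (1/μ) := by
        have := Real.log_le_log (by positivity : (0:ℝ) < 2^e) h2e
        rwa [Real.log_pow] at this
      have hlog2 : (1/2:ℝ) ≤ Real.log 2 := by
        have := Real.log_two_gt_d9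
        linarith
      have hebound : (e:ℝ) ≤ 2 * Real.log (1/μ) := by
        nlinarith [Nat.cast_nonneg (α := ℝ) e]
      have : (dV:ℝ) = (dW:ℝ) + (e:ℝ) := by exact_mod_cast hdVe
      rw [this]
      nlinarith [hlogμ]
  · -- F bound
    intro y hy
    rcases Submodule.mem_map.mp hy with ⟨z, hz, hzy⟩
    have hzyy : z = y := Subtype.ext hzy
    subst hzyy
    have hFy : F z ≤ 4*r + 4*r*t' := h3 z hz
    -- bound t'
    have hE : Real.exp (1/5) ≤ 5/4 := by
      have h := Real.add_one_le_exp (-(1/5) : ℝ)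
      rw [Real.exp_neg] at h
      have hEpos := Real.exp_pos (1/5:ℝ)
      have hmul := mul_le_mul_of_nonneg_right h (le_of_lt hEpos)
      rw [inv_mul_cancel₀ (ne_of_gt hEpos)] at hmul
      nlinarith
    have hlog54 : (1/5:ℝ) ≤ Real.log (5/4) :=
      (Real.le_log_iff_exp_le (by norm_num)).mpr hE
    have hpow : (5/4:ℝ)^t' ≤ 1/μ := by
      rw [le_div_iff₀ hμ]
      nlinarith [h1]
    have hlogt : (t':ℝ) * Real.log (5/4) ≤ Real.log (1/μ) := by
      have := Real.log_le_log (by positivity : (0:ℝ) < (5/4:ℝ)^t') hpow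
      rwa [Real.log_pow] at this
    have ht' : (t':ℝ) ≤ 5 * Real.log (1/μ) := by
      nlinarith [Nat.cast_nonneg (α := ℝ) t']
    calc F z ≤ 4*r + 4*r*t' := hFy
      _ ≤ 100 * r * (Real.log (1/μ) + 1) := by nlinarith [mul_nonneg hr hlogμ]
end

section
/- Let f be a cubic polynomial over a prime field F. Then for all y, z ∈ F^n, Δ_{y+z}(f) = Δ_y(f) + Δ_z(f) + Δ_y(Δ_z f)(·), where Δ_y(Δ_z f) has degree at most 1; consequently the function 𝓕(y) = rank₂(Δ_y(f)) is subadditive: 𝓕(αu + v) ≤ 𝓕(u) + 𝓕(v) for all u,v ∈ F^n and α ∈ F. -/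
open Finset

/-- `f` agrees with a polynomial of total degree at most `d`. -/
def IsPolyDegLE {K : Type*} [CommSemiring K] {σ : Type*} (f : (σ → K) → K) (d : ℕ) : Prop :=
  ∃ P : MvPolynomial σ K, P.totalDegree ≤ d ∧ ∀ x, MvPolynomial.eval x P = f x

/-- `q` can be written as a sum of `r` products of two linear forms plus an
affine function. -/
def HasRank2 {K : Type*} [Field K] {M : Type*} [AddCommGroup M] [Module K M]
    (q : M → K) (r : ℕ) : Prop :=
  ∃ (L L' : Fin r → M →ₗ[K] K) (L0 : M →ₗ[K] K) (b : K),
    ∀ x, q x = (∑ i, L i x * L' i x) + L0 x + b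

/-- `rank₂ q`: the minimal `r` in such a representation. -/
noncomputable def rank2 {K : Type*} [Field K] {M : Type*} [AddCommGroup M] [Module K M]
    (q : M → K) : ℕ :=
  sInf {r | HasRank2 q r}

namespace Stmt7Aux

open MvPolynomial

set_option linter.unusedSectionVars false

section Deg
variable {K : Type*} [CommRing K] [Nontrivial K] {n : ℕ}

lemma eval_eq_aeval (z : Fin n → K) (Q : MvPolynomial (Fin n) K) :
    eval z Q = aeval (R := K) z Q := by
  rw [aeval_eq_eval₂Hom]; rfl

noncomputable def tau (y : Fin n → K) (P : MvPolynomial (Fin n) K) : MvPolynomial (Fin n) K :=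
  bind₁ (fun i => X i + C (y i)) P

lemma eval_tau (y x : Fin n → K) (P : MvPolynomial (Fin n) K) :
    eval x (tau y P) = eval (x + y) P := by
  rw [tau, eval_eq_aeval, aeval_bind₁, eval_eq_aeval]
  have : (fun i => aeval (R := K) x (X i + C (y i))) = x + y := by
    funext i; simp
  rw [this]

lemma degsum_apply_le (m : Fin n →₀ ℕ) (i : Fin n) : m i ≤ m.sum fun _ e => e := by
  rcases eq_or_ne (m i) 0 with h | h
  · simp [h]
  · rw [Finsupp.sum]
    exact Finset.single_le_sum (f := fun j => m j) (fun _ _ => Nat.zero_le _)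
      (Finsupp.mem_support_iff.2 h)

lemma degsum_eq_zero {m : Fin n →₀ ℕ} (h : (m.sum fun _ e => e) = 0) : m = 0 := by
  ext i
  have h2 := degsum_apply_le m i
  rw [h] at h2
  simpa using h2

lemma totalDegree_tau_monomial_le (y : Fin n → K) (m : Fin n →₀ ℕ) (a : K) :
    (tau y (monomial m a)).totalDegree ≤ m.sum fun _ e => e := by
  rw [tau, bind₁_monomial]
  refine (totalDegree_mul _ _).trans ?_
  simp only [totalDegree_C, zero_add, Finsupp.prod]
  refine (totalDegree_finset_prod _ _).trans ?_
  rw [Finsupp.sum]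
  refine Finset.sum_le_sum fun i _ => ?_
  refine (totalDegree_pow _ _).trans ?_
  have h1 : (X (R := K) i + C (y i)).totalDegree ≤ 1 := by
    refine (totalDegree_add _ _).trans (max_le ?_ ?_)
    · exact le_of_eq (totalDegree_X i)
    · simp
  calc m i * (X (R := K) i + C (y i)).totalDegree ≤ m i * 1 := Nat.mul_le_mul_left _ h1
    _ = m i := Nat.mul_one _

lemma totalDegree_tau_sub_monomial (y : Fin n → K) :
    ∀ s : ℕ, ∀ m : Fin n →₀ ℕ, (m.sum fun _ e => e) = s → ∀ (a : K) (d : ℕ), s ≤ d + 1 →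
      (tau y (monomial m a) - monomial m a).totalDegree ≤ d := by
  intro s
  induction s using Nat.strong_induction_on with
  | _ s ih =>
    intro m hm a d hd
    rcases eq_or_ne m 0 with rfl | hm0
    · have h : tau y (monomial 0 a) = monomial 0 a := by
        simp [tau, bind₁_monomial]
      rw [h, sub_self]; simp
    · obtain ⟨i, hi⟩ : ∃ i, m i ≠ 0 := by
        by_contra h; push_neg at h
        exact hm0 (Finsupp.ext fun j => h j)
      set m' : Fin n →₀ ℕ := m - Finsupp.single i 1 with hm'def
      have hmm : m = m' + Finsupp.single i 1 := by
        ext j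
        simp only [hm'def, Finsupp.add_apply, Finsupp.tsub_apply, Finsupp.single_apply]
        rcases eq_or_ne i j with rfl | hj
        · rw [if_pos rfl]
          omega
        · simp [hj]
      have hsum : (m'.sum fun _ e => e) + 1 = s := by
        rw [← hm]
        conv_rhs => rw [hmm]
        rw [Finsupp.sum_add_index' (fun _ => rfl) (fun _ _ _ => rfl)]
        rw [Finsupp.sum_single_index rfl]
      set s' : ℕ := m'.sum fun _ e => e with hs'def
      have hsplit : tau y (monomial m a) = tau y (monomial m' a) * (X i + C (y i)) := by
        conv_lhs => rw [hmm]
        rw [monomial_add_single, pow_one, tau, tau, map_mul, bind₁_X_right]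
      have hkey : tau y (monomial m a) - monomial m a
          = (tau y (monomial m' a) - monomial m' a) * X i + C (y i) * tau y (monomial m' a) := by
        rw [hsplit]
        conv_lhs => rw [hmm]
        rw [monomial_add_single, pow_one]
        ring
      rw [hkey]
      refine (totalDegree_add _ _).trans (max_le ?_ ?_)
      · rcases Nat.eq_zero_or_pos d with rfl | hdpos
        · have hz : m' = 0 := degsum_eq_zero (by omega)
          rw [hz]
          have h : tau y (monomial 0 a) = monomial 0 a := by simp [tau, bind₁_monomial]
          rw [h, sub_self, zero_mul]
          simp
        · refine (totalDegree_mul _ _).trans ?_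
          have h1 := ih s' (by omega) m' rfl a (d - 1) (by omega)
          rw [totalDegree_X]
          omega
      · refine (totalDegree_mul _ _).trans ?_
        rw [totalDegree_C]
        have := totalDegree_tau_monomial_le y m' a
        omega

lemma totalDegree_tau_sub_le (y : Fin n → K) (P : MvPolynomial (Fin n) K) (d : ℕ)
    (h : P.totalDegree ≤ d + 1) : (tau y P - P).totalDegree ≤ d := by
  have hrw : tau y P - P
      = ∑ m ∈ P.support, (tau y (monomial m (coeff m P)) - monomial m (coeff m P)) := by
    rw [Finset.sum_sub_distrib]
    conv_lhs => rw [tau, P.as_sum]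
    rw [map_sum, ← as_sum]
    rfl
  rw [hrw]
  refine (totalDegree_finset_sum _ _).trans (Finset.sup_le fun m hm => ?_)
  exact totalDegree_tau_sub_monomial y _ m rfl _ d ((le_totalDegree hm).trans h)

end Deg


section Cls
variable {n : ℕ}

lemma exists_split {m : Fin n →₀ ℕ} (i : Fin n) (hi : m i ≠ 0) :
    ∃ m' : Fin n →₀ ℕ, m = m' + Finsupp.single i 1 ∧
      (m'.sum fun _ e => e) + 1 = m.sum fun _ e => e := by
  refine ⟨m - Finsupp.single i 1, ?_, ?_⟩
  · ext j
    simp only [Finsupp.add_apply, Finsupp.tsub_apply, Finsupp.single_apply]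
    rcases eq_or_ne i j with rfl | hj
    · rw [if_pos rfl]; omega
    · simp [hj]
  · have hmm : m = (m - Finsupp.single i 1) + Finsupp.single i 1 := by
      ext j
      simp only [Finsupp.add_apply, Finsupp.tsub_apply, Finsupp.single_apply]
      rcases eq_or_ne i j with rfl | hj
      · rw [if_pos rfl]; omega
      · simp [hj]
    conv_rhs => rw [hmm]
    rw [Finsupp.sum_add_index' (fun _ => rfl) (fun _ _ _ => rfl),
      Finsupp.sum_single_index rfl]

lemma exists_ne_zero {m : Fin n →₀ ℕ} (hm : m ≠ 0) : ∃ i, m i ≠ 0 := by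
  by_contra hc; push_neg at hc; exact hm (Finsupp.ext fun j => hc j)

lemma deg1_classify {m : Fin n →₀ ℕ} (h : (m.sum fun _ e => e) ≤ 1) :
    m = 0 ∨ ∃ i, m = Finsupp.single i 1 := by
  rcases eq_or_ne m 0 with rfl | hm0
  · exact Or.inl rfl
  · obtain ⟨i, hi⟩ := exists_ne_zero hm0
    obtain ⟨m', hm', hs⟩ := exists_split i hi
    have : m' = 0 := by
      ext j
      have := degsum_apply_le m' j
      simp only [Finsupp.coe_zero, Pi.zero_apply]
      omega
    subst this
    exact Or.inr ⟨i, by rw [hm', zero_add]⟩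

lemma deg2_classify {m : Fin n →₀ ℕ} (h : (m.sum fun _ e => e) ≤ 2) :
    m = 0 ∨ (∃ i, m = Finsupp.single i 1) ∨
      ∃ i j, m = Finsupp.single i 1 + Finsupp.single j 1 := by
  rcases eq_or_ne m 0 with rfl | hm0
  · exact Or.inl rfl
  · obtain ⟨i, hi⟩ := exists_ne_zero hm0
    obtain ⟨m', hm', hs⟩ := exists_split i hi
    rcases deg1_classify (show (m'.sum fun _ e => e) ≤ 1 by omega) with rfl | ⟨j, rfl⟩
    · exact Or.inr (Or.inl ⟨i, by rw [hm', zero_add]⟩)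
    · exact Or.inr (Or.inr ⟨j, i, hm'⟩)

end Cls

section Rk
variable {K : Type*} [Field K] {M : Type*} [AddCommGroup M] [Module K M]

lemma hasRank2_congr {q q' : M → K} {r : ℕ} (h : ∀ x, q x = q' x) (hq : HasRank2 q r) :
    HasRank2 q' r := by
  obtain ⟨L, L', L0, b, hb⟩ := hq
  exact ⟨L, L', L0, b, fun x => (h x).symm.trans (hb x)⟩

lemma hasRank2_zero : HasRank2 (fun _ : M => (0 : K)) 0 :=
  ⟨Fin.elim0, Fin.elim0, 0, 0, fun x => by simp⟩

lemma hasRank2_add {q1 q2 : M → K} {r1 r2 : ℕ} (h1 : HasRank2 q1 r1) (h2 : HasRank2 q2 r2) :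
    HasRank2 (fun x => q1 x + q2 x) (r1 + r2) := by
  obtain ⟨L1, L1', L01, b1, hb1⟩ := h1
  obtain ⟨L2, L2', L02, b2, hb2⟩ := h2
  refine ⟨Fin.append L1 L2, Fin.append L1' L2', L01 + L02, b1 + b2, fun x => ?_⟩
  show q1 x + q2 x = _
  rw [hb1, hb2, Fin.sum_univ_add]
  simp only [Fin.append_left, Fin.append_right, LinearMap.add_apply]
  ring

lemma hasRank2_smul {q : M → K} {r : ℕ} (α : K) (h : HasRank2 q r) :
    HasRank2 (fun x => α * q x) r := by
  obtain ⟨L, L', L0, b, hb⟩ := h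
  refine ⟨fun i => α • L i, L', α • L0, α * b, fun x => ?_⟩
  show α * q x = _
  rw [hb, mul_add, mul_add, Finset.mul_sum]
  simp [mul_assoc]

lemma hasRank2_affine {q : M → K} {r : ℕ} (h : HasRank2 q r) (L : M →ₗ[K] K) (c : K) :
    HasRank2 (fun x => q x + (L x + c)) r := by
  obtain ⟨Lq, Lq', L0, b, hb⟩ := h
  refine ⟨Lq, Lq', L0 + L, b + c, fun x => ?_⟩
  show q x + (L x + c) = _
  rw [hb]
  simp only [LinearMap.add_apply]
  ring

lemma hasRank2_finsetSum {ι : Type*} (s : Finset ι) (F : ι → M → K)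
    (h : ∀ i ∈ s, ∃ r, HasRank2 (F i) r) :
    ∃ r, HasRank2 (fun x => ∑ i ∈ s, F i x) r := by
  classical
  induction s using Finset.induction_on with
  | empty => exact ⟨0, hasRank2_congr (fun x => by simp) hasRank2_zero⟩
  | @insert a s ha ih =>
    obtain ⟨r1, h1⟩ := h a (Finset.mem_insert_self a s)
    obtain ⟨r2, h2⟩ := ih fun i hi => h i (Finset.mem_insert_of_mem hi)
    exact ⟨r1 + r2, hasRank2_congr (fun x => (Finset.sum_insert ha).symm) (hasRank2_add h1 h2)⟩

lemma rank2_le {q : M → K} {r : ℕ} (h : HasRank2 q r) : rank2 q ≤ r := Nat.sInf_le h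

lemma hasRank2_rank2 {q : M → K} (h : ∃ r, HasRank2 q r) : HasRank2 q (rank2 q) :=
  Nat.sInf_mem h

end Rk

section Mon
variable {K : Type*} [Field K] {n : ℕ}

lemma hasRank2_monomial (m : Fin n →₀ ℕ) (c : K) (h : (m.sum fun _ e => e) ≤ 2) :
    HasRank2 (fun x : Fin n → K => eval x (monomial m c)) 1 := by
  rcases deg2_classify h with rfl | ⟨i, rfl⟩ | ⟨i, j, rfl⟩
  · exact ⟨0, 0, 0, c, fun x => by simp⟩
  · refine ⟨0, 0, c • LinearMap.proj i, 0, fun x => ?_⟩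
    show eval x (monomial _ c) = _
    simp [eval_monomial, Finsupp.prod_single_index]
  · refine ⟨fun _ => c • LinearMap.proj i, fun _ => LinearMap.proj j, 0, 0, fun x => ?_⟩
    show eval x (monomial _ c) = _
    have he : eval x (monomial (Finsupp.single i 1 + Finsupp.single j 1) c) = c * (x i * x j) := by
      rw [eval_monomial, Finsupp.prod_add_index' (fun a => pow_zero (x a))
        (fun a b1 b2 => pow_add (x a) b1 b2)]
      simp [Finsupp.prod_single_index]
    rw [he]
    simp [Fin.sum_univ_succ]
    ring

lemma exists_hasRank2_of_deg2 {g : (Fin n → K) → K} (hg : IsPolyDegLE g 2) :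
    ∃ r, HasRank2 g r := by
  obtain ⟨P, hP, hPg⟩ := hg
  obtain ⟨r, hr⟩ := hasRank2_finsetSum P.support
    (fun m => fun x : Fin n → K => eval x (monomial m (coeff m P)))
    (fun m hm => ⟨1, hasRank2_monomial _ _ ((le_totalDegree hm).trans hP)⟩)
  refine ⟨r, hasRank2_congr (fun x => ?_) hr⟩
  rw [← hPg x]
  conv_rhs => rw [P.as_sum]
  rw [map_sum]

lemma affine_of_deg_le_one {g : (Fin n → K) → K} (hg : IsPolyDegLE g 1) :
    ∃ (L : (Fin n → K) →ₗ[K] K) (b : K), ∀ x, g x = L x + b := by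
  obtain ⟨P, hP, hPg⟩ := hg
  have key : ∀ m ∈ P.support, ∃ (L : (Fin n → K) →ₗ[K] K) (b : K),
      ∀ x, eval x (monomial m (coeff m P)) = L x + b := by
    intro m hm
    rcases deg1_classify ((le_totalDegree hm).trans hP) with rfl | ⟨i, rfl⟩
    · exact ⟨0, coeff 0 P, fun x => by simp⟩
    · refine ⟨coeff (Finsupp.single i 1) P • LinearMap.proj i, 0, fun x => ?_⟩
      simp [eval_monomial, Finsupp.prod_single_index]
  choose Lm bm hLb using key
  refine ⟨∑ m ∈ P.support.attach, Lm m.1 m.2, ∑ m ∈ P.support.attach, bm m.1 m.2, fun x => ?_⟩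
  rw [← hPg x]
  conv_lhs => rw [P.as_sum]
  rw [map_sum, LinearMap.coe_sum, Finset.sum_apply, ← Finset.sum_add_distrib,
    ← Finset.sum_attach P.support (fun m => eval x (monomial m (coeff m P)))]
  exact Finset.sum_congr rfl fun m _ => hLb m.1 m.2 x

end Mon

section Fn
variable {K : Type*} [CommRing K] [Nontrivial K] {n : ℕ}

lemma isPolyDegLE_congr {f g : (Fin n → K) → K} {d : ℕ} (h : ∀ x, f x = g x)
    (hf : IsPolyDegLE f d) : IsPolyDegLE g d := by
  obtain ⟨P, hP, hPf⟩ := hf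
  exact ⟨P, hP, fun x => (hPf x).trans (h x)⟩

lemma isPolyDegLE_diff {f : (Fin n → K) → K} {d : ℕ} (hf : IsPolyDegLE f (d + 1))
    (y : Fin n → K) : IsPolyDegLE (fun x => f (x + y) - f x) d := by
  obtain ⟨P, hP, hPf⟩ := hf
  exact ⟨tau y P - P, totalDegree_tau_sub_le y P d hP,
    fun x => by rw [map_sub, eval_tau, hPf, hPf]⟩

lemma isPolyDegLE_add {f g : (Fin n → K) → K} {d : ℕ} (hf : IsPolyDegLE f d)
    (hg : IsPolyDegLE g d) : IsPolyDegLE (fun x => f x + g x) d := by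
  obtain ⟨P, hP, hPf⟩ := hf; obtain ⟨Q, hQ, hQg⟩ := hg
  exact ⟨P + Q, (MvPolynomial.totalDegree_add P Q).trans (max_le hP hQ),
    fun x => by rw [map_add, hPf, hQg]⟩

lemma isPolyDegLE_sum {ι : Type*} (s : Finset ι) (F : ι → (Fin n → K) → K) (d : ℕ) :
    (∀ i ∈ s, IsPolyDegLE (F i) d) → IsPolyDegLE (fun x => ∑ i ∈ s, F i x) d := by
  classical
  induction s using Finset.induction_on with
  | empty => exact fun _ => ⟨0, by simp, fun x => by simp⟩
  | @insert a s ha ih =>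
    intro h
    refine isPolyDegLE_congr (fun x => ?_)
      (isPolyDegLE_add (h a (Finset.mem_insert_self a s))
        (ih fun i hi => h i (Finset.mem_insert_of_mem hi)))
    rw [Finset.sum_insert ha]

lemma isPolyDegLE_secondDiff {f : (Fin n → K) → K} (hf : IsPolyDegLE f 3) (y z : Fin n → K) :
    IsPolyDegLE (fun x => f (x + y + z) - f (x + y) - f (x + z) + f x) 1 := by
  have h2 : IsPolyDegLE (fun x => f (x + y) - f x) 2 := isPolyDegLE_diff hf y
  have h1 : IsPolyDegLE (fun x => (f (x + z + y) - f (x + z)) - (f (x + y) - f x)) 1 :=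
    isPolyDegLE_diff h2 z
  refine isPolyDegLE_congr (fun x => ?_) h1
  rw [add_right_comm x z y]
  ring

end Fn

end Stmt7Aux

open Stmt7Aux

/-- For a cubic `f`: `Δ_{y+z} f = Δ_y f + Δ_z f + Δ_y Δ_z f`, where `Δ_y Δ_z f` has
degree at most 1; consequently `𝓕(y) = rank₂(Δ_y f)` is subadditive. -/
theorem stmt_7 {p n : ℕ} [Fact p.Prime] (f : (Fin n → ZMod p) → ZMod p)
    (hf : IsPolyDegLE f 3) :
    (∀ y z x : Fin n → ZMod p,
      f (x + (y + z)) - f x =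
        (f (x + y) - f x) + (f (x + z) - f x) +
          (f (x + y + z) - f (x + y) - f (x + z) + f x)) ∧
    (∀ y z : Fin n → ZMod p,
      IsPolyDegLE (fun x => f (x + y + z) - f (x + y) - f (x + z) + f x) 1) ∧
    (∀ (u v : Fin n → ZMod p) (α : ZMod p),
      rank2 (fun x => f (x + (α • u + v)) - f x) ≤
        rank2 (fun x => f (x + u) - f x) + rank2 (fun x => f (x + v) - f x)) := by
  refine ⟨?_, ?_, ?_⟩
  · intro y z x
    rw [show x + (y + z) = x + y + z from (add_assoc x y z).symm]
    ring
  · intro y z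
    exact isPolyDegLE_secondDiff hf y z
  · intro u v α
    haveI : NeZero p := ⟨(Fact.out : p.Prime).ne_zero⟩
    set a := α.val with ha
    have hα : ((a : ℕ) : ZMod p) = α := ZMod.natCast_rightInverse α
    have hvec : (a : ℕ) • u = α • u := by
      ext i
      simp [nsmul_eq_mul, hα]
    have hqu : IsPolyDegLE (fun x => f (x + u) - f x) 2 := isPolyDegLE_diff hf u
    have hqv : IsPolyDegLE (fun x => f (x + v) - f x) 2 := isPolyDegLE_diff hf v
    have hu := hasRank2_rank2 (exists_hasRank2_of_deg2 hqu)
    have hv := hasRank2_rank2 (exists_hasRank2_of_deg2 hqv)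
    have he2 : IsPolyDegLE
        (fun x => (f (x + α • u) - f x) - α * (f (x + u) - f x)) 1 := by
      have hterm : ∀ j : ℕ, IsPolyDegLE
          (fun x => f (x + j • u + u) - f (x + j • u) - f (x + u) + f x) 1 := by
        intro j
        refine isPolyDegLE_congr (fun x => ?_) (isPolyDegLE_secondDiff hf u (j • u))
        rw [add_right_comm x u (j • u)]
        ring
      have hsum := isPolyDegLE_sum (Finset.range a)
        (fun j => fun x => f (x + j • u + u) - f (x + j • u) - f (x + u) + f x) 1
        (fun j _ => hterm j)
      refine isPolyDegLE_congr (fun x => ?_) hsum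
      show ∑ j ∈ Finset.range a, (f (x + j • u + u) - f (x + j • u) - f (x + u) + f x)
          = (f (x + α • u) - f x) - α * (f (x + u) - f x)
      have tel : ∑ j ∈ Finset.range a, (f (x + (j + 1) • u) - f (x + j • u))
          = f (x + a • u) - f (x + 0 • u) := Finset.sum_range_sub (fun j => f (x + j • u)) a
      have hre : ∀ j : ℕ, f (x + j • u + u) = f (x + (j + 1) • u) := by
        intro j
        congr 1
        rw [succ_nsmul, ← add_assoc]
      calc ∑ j ∈ Finset.range a, (f (x + j • u + u) - f (x + j • u) - f (x + u) + f x)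
          = ∑ j ∈ Finset.range a,
              ((f (x + (j + 1) • u) - f (x + j • u)) - (f (x + u) - f x)) := by
            refine Finset.sum_congr rfl fun j _ => ?_
            rw [hre j]; ring
        _ = (f (x + a • u) - f (x + 0 • u)) - a • (f (x + u) - f x) := by
            rw [Finset.sum_sub_distrib, tel, Finset.sum_const, Finset.card_range]
        _ = (f (x + α • u) - f x) - α * (f (x + u) - f x) := by
            rw [hvec, zero_smul, add_zero, nsmul_eq_mul, hα]
    have he1 : IsPolyDegLE
        (fun x => f (x + α • u + v) - f (x + α • u) - f (x + v) + f x) 1 :=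
      isPolyDegLE_secondDiff hf (α • u) v
    have he : IsPolyDegLE
        (fun x => (f (x + (α • u + v)) - f x) - α * (f (x + u) - f x)
          - (f (x + v) - f x)) 1 := by
      refine isPolyDegLE_congr (fun x => ?_) (isPolyDegLE_add he1 he2)
      show (f (x + α • u + v) - f (x + α • u) - f (x + v) + f x)
          + ((f (x + α • u) - f x) - α * (f (x + u) - f x))
          = (f (x + (α • u + v)) - f x) - α * (f (x + u) - f x) - (f (x + v) - f x)
      rw [add_assoc x (α • u) v]
      ring
    obtain ⟨L, b, hLb⟩ := affine_of_deg_le_one he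
    have h1 : HasRank2 (fun x => α * (f (x + u) - f x))
        (rank2 (fun x : Fin n → ZMod p => f (x + u) - f x)) := hasRank2_smul α hu
    have h2 := hasRank2_add h1 hv
    have h3 := hasRank2_affine h2 L b
    refine rank2_le (hasRank2_congr (fun x => ?_) h3)
    show α * (f (x + u) - f x) + (f (x + v) - f x) + (L x + b)
        = f (x + (α • u + v)) - f x
    rw [← hLb x]
    show α * (f (x + u) - f x) + (f (x + v) - f x)
        + ((f (x + (α • u + v)) - f x) - α * (f (x + u) - f x) - (f (x + v) - f x))
        = f (x + (α • u + v)) - f x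
    ring
end

section
/- Let M be a linear space of quadratic polynomials over F_2^n such that rank₂(p) ≤ r for all p ∈ M. Then there exists a linear subspace V ⊆ F_2^n of codimension at most 4r such that the restriction p|_V is an affine function for every p ∈ M. -/
open Finset

open Module LinearMap Finset

namespace Stmt9Aux

variable {V : Type} [AddCommGroup V] [Module (ZMod 2) V]

abbrev Bform (V : Type) [AddCommGroup V] [Module (ZMod 2) V] :=
  V →ₗ[ZMod 2] Module.Dual (ZMod 2) V

noncomputable def brank (B : Bform V) : ℕ := finrank (ZMod 2) (LinearMap.range B)

def brestrict (B : Bform V) (W : Submodule (ZMod 2) V) : Bform W :=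
  W.subtype.dualMap ∘ₗ B ∘ₗ W.subtype

@[simp] lemma brestrict_apply (B : Bform V) (W : Submodule (ZMod 2) V) (x y : W) :
    brestrict B W x y = B x y := rfl

lemma brestrict_add (B B' : Bform V) (W : Submodule (ZMod 2) V) :
    brestrict (B + B') W = brestrict B W + brestrict B' W := by
  ext x y; rfl

-- rank of a submodule under a linear map decomposition
lemma finrank_map_add_finrank_inf_ker {W : Type} [AddCommGroup W] [Module (ZMod 2) W]
    [FiniteDimensional (ZMod 2) V]
    (f : V →ₗ[ZMod 2] W) (p : Submodule (ZMod 2) V) :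
    finrank (ZMod 2) (p.map f) + finrank (ZMod 2) (p ⊓ LinearMap.ker f : Submodule (ZMod 2) V)
      = finrank (ZMod 2) p := by
  have h := LinearMap.finrank_range_add_finrank_ker (f ∘ₗ p.subtype)
  have hr : LinearMap.range (f ∘ₗ p.subtype) = p.map f := by
    rw [LinearMap.range_comp, Submodule.range_subtype]
  have hk : LinearMap.ker (f ∘ₗ p.subtype) = Submodule.comap p.subtype (p ⊓ LinearMap.ker f) := by
    rw [LinearMap.ker_comp]
    ext x; simp
  have hk2 : finrank (ZMod 2) (LinearMap.ker (f ∘ₗ p.subtype))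
      = finrank (ZMod 2) (p ⊓ LinearMap.ker f : Submodule (ZMod 2) V) := by
    rw [hk]
    exact LinearEquiv.finrank_eq (Submodule.comapSubtypeEquivOfLe inf_le_left)
  rw [hr, hk2] at h
  exact h


variable {V : Type} [AddCommGroup V] [Module (ZMod 2) V] [FiniteDimensional (ZMod 2) V]

def ortho (B : Bform V) (K : Submodule (ZMod 2) V) : Submodule (ZMod 2) V :=
  LinearMap.ker (K.subtype.dualMap ∘ₗ B)

lemma mem_ortho {B : Bform V} {K : Submodule (ZMod 2) V} {v : V} :
    v ∈ ortho B K ↔ ∀ k ∈ K, B v k = 0 := by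
  constructor
  · intro h k hk
    have : (K.subtype.dualMap ∘ₗ B) v = 0 := h
    have := congrArg (fun f => f ⟨k, hk⟩) this
    simpa using this
  · intro h
    show (K.subtype.dualMap ∘ₗ B) v = 0
    ext k
    simpa using h k.1 k.2

lemma range_brestrict (B : Bform V) (K : Submodule (ZMod 2) V) :
    LinearMap.range (brestrict B K) = Submodule.map K.subtype.dualMap (Submodule.map B K) := by
  unfold brestrict
  rw [LinearMap.range_comp, LinearMap.range_comp, Submodule.range_subtype]

lemma factF (B : Bform V) (K : Submodule (ZMod 2) V) :
    brank (brestrict B K) + brank (brestrict B (ortho B K)) ≤ brank B := by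
  set π := K.subtype.dualMap with hπ
  have hdec := finrank_map_add_finrank_inf_ker π (LinearMap.range B)
  -- first summand
  have h1 : brank (brestrict B K) ≤ finrank (ZMod 2) ((LinearMap.range B).map π) := by
    unfold brank
    rw [range_brestrict]
    exact Submodule.finrank_mono (Submodule.map_mono (LinearMap.map_le_range))
  -- second summand
  have h2 : brank (brestrict B (ortho B K))
      ≤ finrank (ZMod 2) (LinearMap.range B ⊓ LinearMap.ker π : Submodule (ZMod 2) (Module.Dual (ZMod 2) V)) := by
    unfold brank
    rw [range_brestrict]
    have hle : Submodule.map B (ortho B K) ≤ LinearMap.range B ⊓ LinearMap.ker π := by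
      refine le_inf LinearMap.map_le_range ?_
      rintro x ⟨o, ho, rfl⟩
      exact ho
    calc finrank (ZMod 2) (Submodule.map (ortho B K).subtype.dualMap (Submodule.map B (ortho B K)))
        ≤ finrank (ZMod 2) (Submodule.map B (ortho B K)) := Submodule.finrank_map_le _ _
      _ ≤ _ := Submodule.finrank_mono hle
  have hbB : brank B = finrank (ZMod 2) (LinearMap.range B) := rfl
  omega


lemma brank_brestrict_of_sup_ker (B : Bform V) (hs : ∀ x y, B x y = B y x)
    (U : Submodule (ZMod 2) V) (h : U ⊔ LinearMap.ker B = ⊤) :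
    brank (brestrict B U) = brank B := by
  have hmap : Submodule.map B U = LinearMap.range B := by
    have : Submodule.map B U = Submodule.map B (U ⊔ LinearMap.ker B) := by
      rw [Submodule.map_sup]
      have : Submodule.map B (LinearMap.ker B) = ⊥ := by
        rw [Submodule.eq_bot_iff]
        rintro x ⟨k, hk, rfl⟩
        exact hk
      rw [this, sup_bot_eq]
    rw [this, h, Submodule.map_top]
  have hinf : LinearMap.range B ⊓ LinearMap.ker (U.subtype.dualMap) = ⊥ := by
    rw [Submodule.eq_bot_iff]
    rintro ξ ⟨⟨v, rfl⟩, hker⟩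
    have hU : ∀ u ∈ U, B v u = 0 := by
      intro u hu
      have := congrArg (fun f => f ⟨u, hu⟩) hker
      simpa using this
    have hK : ∀ k ∈ LinearMap.ker B, B v k = 0 := by
      intro k hk
      rw [hs v k]
      simp [LinearMap.mem_ker.mp hk]
    ext w
    have hw : w ∈ U ⊔ LinearMap.ker B := by rw [h]; trivial
    rcases Submodule.mem_sup.mp hw with ⟨u, hu, k, hk, rfl⟩
    simp [map_add, hU u hu, hK k hk]
  have hdec := finrank_map_add_finrank_inf_ker U.subtype.dualMap (LinearMap.range B)
  rw [hinf] at hdec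
  simp only [finrank_bot, add_zero] at hdec
  unfold brank
  rw [range_brestrict, hmap, hdec]

lemma brank_add_le (B B' : Bform V) [FiniteDimensional (ZMod 2) V] :
    brank (B + B') ≤ brank B + brank B' := by
  have hle : LinearMap.range (B + B') ≤ LinearMap.range B ⊔ LinearMap.range B' := by
    rintro x ⟨v, rfl⟩
    exact Submodule.mem_sup.mpr ⟨B v, ⟨v, rfl⟩, B' v, ⟨v, rfl⟩, rfl⟩
  calc brank (B + B') ≤ finrank (ZMod 2) (LinearMap.range B ⊔ LinearMap.range B' :
        Submodule (ZMod 2) (Module.Dual (ZMod 2) V)) := Submodule.finrank_mono hle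
    _ ≤ brank B + brank B' := by
        have := Submodule.finrank_sup_add_finrank_inf_eq (LinearMap.range B) (LinearMap.range B')
        unfold brank; omega

lemma exists_Ka [FiniteDimensional (ZMod 2) V] (B : Bform V) (hs : ∀ x y, B x y = B y x)
    (K1 : Submodule (ZMod 2) V) :
    ∃ Ka : Submodule (ZMod 2) V, Ka ≤ K1 ∧
      finrank (ZMod 2) Ka = brank (brestrict B K1) ∧
      (∀ a ∈ Ka, (∀ a' ∈ Ka, B a a' = 0) → a = 0) := by
  set rB := brestrict B K1 with hrB
  obtain ⟨W, hW⟩ := Submodule.exists_isCompl (LinearMap.ker rB)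
  refine ⟨W.map K1.subtype, Submodule.map_subtype_le _ _, ?_, ?_⟩
  · have h1 := Submodule.finrank_map_subtype_eq K1 W
    have h2 := Submodule.finrank_add_eq_of_isCompl hW
    have h3 := LinearMap.finrank_range_add_finrank_ker rB
    unfold brank
    omega
  · rintro a ⟨w, hw, rfl⟩ hzero
    have hker : w ∈ LinearMap.ker rB := by
      rw [LinearMap.mem_ker]
      ext k
      have hk : (k : K1) ∈ LinearMap.ker rB ⊔ W := by rw [hW.sup_eq_top]; trivial
      rcases Submodule.mem_sup.mp hk with ⟨r, hr, w', hw', rfl⟩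
      have hwr : B (K1.subtype w) (K1.subtype r) = 0 := by
        rw [hs]
        have : rB r = 0 := LinearMap.mem_ker.mp hr
        have := congrArg (fun f => f w) this
        simpa [hrB] using this
      have hww' : B (K1.subtype w) (K1.subtype w') = 0 :=
        hzero (K1.subtype w') ⟨w', hw', rfl⟩
      show rB w (r + w') = 0
      have : rB w (r + w') = B (K1.subtype w) (K1.subtype r) + B (K1.subtype w) (K1.subtype w') := by
        simp [hrB, brestrict]
      rw [this, hwr, hww', add_zero]
    have : w ∈ LinearMap.ker rB ⊓ W := ⟨hker, hw⟩
    rw [hW.inf_eq_bot] at this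
    simp [(Submodule.mem_bot _).mp this]

lemma key_lemma [FiniteDimensional (ZMod 2) V] (B1 B : Bform V)
    (h1s : ∀ x y, B1 x y = B1 y x) (hBs : ∀ x y, B x y = B y x) :
    brank B1 + 2 * brank (brestrict B (LinearMap.ker B1))
      ≤ brank (B1 + B) + brank B := by
  set K1 := LinearMap.ker B1 with hK1
  set d := brank (brestrict B K1) with hd
  obtain ⟨Ka, hKaK1, hKad, hnd⟩ := exists_Ka B hBs K1
  set C := B1 + B with hC
  set U := ortho B Ka with hU
  -- B1 vanishes with first argument in K1
  have hB1K : ∀ a ∈ K1, ∀ v, B1 a v = 0 := by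
    intro a ha v
    have : B1 a = 0 := LinearMap.mem_ker.mp ha
    rw [this]; rfl
  -- restrict C Ka = restrict B Ka
  have hCKa : brestrict C Ka = brestrict B Ka := by
    ext a a'
    have h0 : B1 (a : V) (a' : V) = 0 := hB1K _ (hKaK1 a.2) _
    show C (a : V) (a' : V) = B (a : V) (a' : V)
    simp [hC, h0]
  -- ortho C Ka = U
  have hCU : ortho C Ka = U := by
    ext v
    rw [hU, mem_ortho, mem_ortho]
    constructor <;> intro h k hk <;> have hb := h k hk
    · have : B1 v k = 0 := by rw [h1s]; exact hB1K _ (hKaK1 hk) _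
      simpa [hC, this] using hb
    · have : B1 v k = 0 := by rw [h1s]; exact hB1K _ (hKaK1 hk) _
      simp [hC, this, hb]
  -- rank of B on Ka is d (injectivity)
  have hBKa : brank (brestrict B Ka) = d := by
    have hker : LinearMap.ker (brestrict B Ka) = ⊥ := by
      rw [Submodule.eq_bot_iff]
      intro a ha
      have h0 : ∀ a' ∈ Ka, B (a : V) a' = 0 := by
        intro a' ha'
        have h1 : brestrict B Ka a = 0 := ha
        have h2 := congrArg (fun f => f (⟨a', ha'⟩ : Ka)) h1
        simpa using h2
      have := hnd (a : V) a.2 h0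
      exact Subtype.ext this
    have h3 := LinearMap.finrank_range_add_finrank_ker (brestrict B Ka)
    rw [hker] at h3
    simp only [finrank_bot, add_zero] at h3
    unfold brank
    rw [h3, hKad]
  -- Fact F applications
  have hF1 := factF B Ka
  have hF2 := factF C Ka
  rw [hCKa, hCU] at hF2
  rw [hBKa] at hF1 hF2
  -- restriction of B1 to U has full rank
  have hUtop : U ⊔ K1 = ⊤ := by
    have hinf : U ⊓ Ka = ⊥ := by
      rw [Submodule.eq_bot_iff]
      rintro x ⟨hxU, hxKa⟩
      exact hnd x hxKa (mem_ortho.mp hxU)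
    have hfinU : finrank (ZMod 2) V ≤ finrank (ZMod 2) U + d := by
      have h3 := LinearMap.finrank_range_add_finrank_ker (Ka.subtype.dualMap ∘ₗ B)
      have hrle : finrank (ZMod 2) (LinearMap.range (Ka.subtype.dualMap ∘ₗ B)) ≤ d := by
        calc finrank (ZMod 2) (LinearMap.range (Ka.subtype.dualMap ∘ₗ B))
            ≤ finrank (ZMod 2) (Module.Dual (ZMod 2) Ka) := Submodule.finrank_le _
          _ = finrank (ZMod 2) Ka := Subspace.dual_finrank_eq
          _ = d := hKad
      have h4 : LinearMap.ker (Ka.subtype.dualMap ∘ₗ B) = U := rfl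
      rw [h4] at h3
      omega
    have hsup := Submodule.finrank_sup_add_finrank_inf_eq U Ka
    rw [hinf] at hsup
    simp only [finrank_bot, add_zero] at hsup
    have htop : U ⊔ Ka = ⊤ := by
      apply Submodule.eq_top_of_finrank_eq
      have hle := Submodule.finrank_le (U ⊔ Ka)
      rw [hKad] at hsup
      omega
    rw [eq_top_iff, ← htop]
    exact sup_le_sup_left hKaK1 U
  have h8 : brank (brestrict B1 U) = brank B1 :=
    brank_brestrict_of_sup_ker B1 h1s U hUtop
  have h6 : brestrict B1 U = brestrict C U + brestrict B U := by
    rw [← brestrict_add]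
    congr 1
    ext x y
    have htwo : ∀ a : ZMod 2, a + a = 0 := by decide
    show B1 x y = (B1 x y + B x y) + B x y
    rw [add_assoc, htwo, add_zero]
  have h7 := brank_add_le (brestrict C U) (brestrict B U)
  rw [← h6] at h7
  rw [h8] at h7
  have hcu : brestrict B (ortho B Ka) = brestrict B U := rfl
  rw [hcu] at hF1
  omega

lemma brank_eq_zero {B : Bform V} [FiniteDimensional (ZMod 2) V] (h : brank B = 0) : B = 0 := by
  have : LinearMap.range B = ⊥ := Submodule.finrank_eq_zero.mp h
  rw [← LinearMap.range_eq_bot]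
  exact this

lemma main_induction (R : ℕ) :
    ∀ (V : Type) [AddCommGroup V] [Module (ZMod 2) V] [FiniteDimensional (ZMod 2) V]
      (S : Set (Bform V)),
      (∀ B ∈ S, ∀ B' ∈ S, B + B' ∈ S) →
      (∀ B ∈ S, ∀ x y, B x y = B y x) →
      (∀ B ∈ S, brank B ≤ R) →
      ∃ W : Submodule (ZMod 2) V, finrank (ZMod 2) V ≤ finrank (ZMod 2) W + 2*R ∧
        ∀ B ∈ S, ∀ x y : W, B (x : V) (y : V) = 0 := by
  induction R using Nat.strong_induction_on with
  | _ R IH =>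
    intro V _ _ _ S hadd hsym hrk
    rcases Set.eq_empty_or_nonempty S with hS | hS
    · exact ⟨⊤, by simp [finrank_top], by simp [hS]⟩
    by_cases hR0 : ∀ B ∈ S, brank B = 0
    · refine ⟨⊤, by simp [finrank_top], ?_⟩
      intro B hB x y
      rw [brank_eq_zero (hR0 B hB)]
      rfl
    push_neg at hR0
    -- pick B1 of maximal rank
    have hbdd : BddAbove (brank '' S) := ⟨R, by rintro x ⟨B, hB, rfl⟩; exact hrk B hB⟩
    have hne : (brank '' S).Nonempty := hS.image _
    set Rmax := sSup (brank '' S) with hRmax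
    obtain ⟨B1, hB1S, hB1⟩ := Nat.sSup_mem hne hbdd
    have hle : ∀ B ∈ S, brank B ≤ Rmax := fun B hB => le_csSup hbdd ⟨B, hB, rfl⟩
    have hRmax1 : 1 ≤ Rmax := by
      obtain ⟨B0, hB0S, hB0⟩ := hR0
      have := hle B0 hB0S
      omega
    have hRmaxR : Rmax ≤ R := by rw [hRmax, ← hB1]; exact hrk B1 hB1S
    set K1 := LinearMap.ker B1 with hK1
    set S' : Set (Bform K1) := (fun B => brestrict B K1) '' S with hS'
    have hadd' : ∀ B ∈ S', ∀ B' ∈ S', B + B' ∈ S' := by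
      rintro _ ⟨B, hB, rfl⟩ _ ⟨B', hB', rfl⟩
      exact ⟨B + B', hadd B hB B' hB', brestrict_add B B' K1⟩
    have hsym' : ∀ B ∈ S', ∀ x y, B x y = B y x := by
      rintro _ ⟨B, hB, rfl⟩ x y
      exact hsym B hB x y
    have hrk' : ∀ B' ∈ S', brank B' ≤ Rmax / 2 := by
      rintro _ ⟨B, hB, rfl⟩
      show brank (brestrict B K1) ≤ Rmax / 2
      have hB1R : brank B1 = Rmax := by rw [hRmax, ← hB1]
      have hkey := key_lemma B1 B (hsym B1 hB1S) (hsym B hB)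
      have h1 := hle (B1 + B) (hadd B1 hB1S B hB)
      have h2 := hle B hB
      rw [← hK1] at hkey
      omega
    obtain ⟨W', hW'1, hW'2⟩ := IH (Rmax / 2) (by omega) K1 S' hadd' hsym' hrk'
    refine ⟨W'.map K1.subtype, ?_, ?_⟩
    · have hrn := LinearMap.finrank_range_add_finrank_ker B1
      have hfr : finrank (ZMod 2) (Submodule.map K1.subtype W') = finrank (ZMod 2) W' :=
        Submodule.finrank_map_subtype_eq K1 W'
      have : brank B1 = Rmax := hB1
      unfold brank at this
      rw [← hK1] at hrn
      omega
    · rintro B hB x y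
      obtain ⟨x', hx', hxe⟩ := x.2
      obtain ⟨y', hy', hye⟩ := y.2
      have h0 := hW'2 (brestrict B K1) ⟨B, hB, rfl⟩ ⟨x', hx'⟩ ⟨y', hy'⟩
      show B (x : V) (y : V) = 0
      rw [← hxe, ← hye]
      exact h0


lemma zmod2_pow (a : ZMod 2) (k : ℕ) (hk : k ≠ 0) : a ^ k = a := by
  obtain ⟨j, rfl⟩ := Nat.exists_eq_succ_of_ne_zero hk
  clear hk
  induction j with
  | zero => exact pow_one a
  | succ j ih =>
      rw [pow_succ, ih]
      exact (by decide : ∀ b : ZMod 2, b * b = b) a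

/-- a single monomial of degree ≤ 2 is a product of two linear forms plus affine -/
lemma monomial_decomp {n : ℕ} (m : Fin n →₀ ℕ) (c : ZMod 2)
    (hdeg : m.sum (fun _ e => e) ≤ 2) :
    ∃ (l l' l0 : (Fin n → ZMod 2) →ₗ[ZMod 2] ZMod 2) (b : ZMod 2),
      ∀ x, MvPolynomial.eval x (MvPolynomial.monomial m c) = l x * l' x + l0 x + b := by
  have hcard : m.support.card ≤ 2 := by
    have h1 : m.support.card = ∑ i ∈ m.support, 1 := (Finset.card_eq_sum_ones _)
    have h2 : ∑ i ∈ m.support, 1 ≤ ∑ i ∈ m.support, m i := by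
      apply Finset.sum_le_sum
      intro i hi
      have := Finsupp.mem_support_iff.mp hi
      omega
    have h3 : m.sum (fun _ e => e) = ∑ i ∈ m.support, m i := rfl
    omega
  have heval : ∀ x : Fin n → ZMod 2,
      MvPolynomial.eval x (MvPolynomial.monomial m c) = c * ∏ i ∈ m.support, x i := by
    intro x
    rw [MvPolynomial.eval_monomial]
    have : (m.prod fun i k => x i ^ k) = ∏ i ∈ m.support, x i ^ m i := rfl
    rw [this]
    congr 1
    apply Finset.prod_congr rfl
    intro i hi
    exact zmod2_pow (x i) (m i) (Finsupp.mem_support_iff.mp hi)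
  have hc : m.support.card = 0 ∨ m.support.card = 1 ∨ m.support.card = 2 := by omega
  rcases hc with hc | hc | hc
  · refine ⟨0, 0, 0, c, fun x => ?_⟩
    rw [heval x, Finset.card_eq_zero.mp hc]
    simp
  · obtain ⟨i, hi⟩ := Finset.card_eq_one.mp hc
    refine ⟨0, 0, c • LinearMap.proj i, 0, fun x => ?_⟩
    rw [heval x, hi]
    simp [mul_comm]
  · obtain ⟨i, j, hij, hs⟩ := Finset.card_eq_two.mp hc
    refine ⟨c • LinearMap.proj i, LinearMap.proj j, 0, 0, fun x => ?_⟩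
    rw [heval x, hs, Finset.prod_pair hij]
    simp [mul_assoc, mul_comm, mul_left_comm]

lemma hasRank2_of_poly {n : ℕ} (q : (Fin n → ZMod 2) → ZMod 2) (h : IsPolyDegLE q 2) :
    ∃ s, HasRank2 q s := by
  obtain ⟨P, hdeg, heval⟩ := h
  suffices hsuf : ∀ t : Finset (Fin n →₀ ℕ), (∀ m ∈ t, m.sum (fun _ e => e) ≤ 2) →
      HasRank2 (fun x => ∑ m ∈ t, MvPolynomial.eval x (MvPolynomial.monomial m (P.coeff m))) t.card by
    obtain ⟨L, L', L0, b, hrep⟩ := hsuf P.support (fun m hm => le_trans (MvPolynomial.le_totalDegree hm) hdeg)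
    refine ⟨P.support.card, L, L', L0, b, fun x => ?_⟩
    rw [← heval x]
    rw [← hrep x]
    conv_lhs => rw [P.as_sum]
    rw [map_sum]
  intro t
  induction t using Finset.induction with
  | empty => exact fun _ => ⟨0, 0, 0, 0, fun x => by simp; rfl⟩
  | @insert m t' hm ih =>
      intro hdegs
      obtain ⟨l, l', l0, b, hmono⟩ := monomial_decomp m (P.coeff m) (hdegs m (Finset.mem_insert_self m t'))
      obtain ⟨L, L', L0, b', hrest⟩ := ih (fun m' hm' => hdegs m' (Finset.mem_insert_of_mem hm'))
      rw [Finset.card_insert_of_notMem hm]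
      refine ⟨Fin.cons l L, Fin.cons l' L', l0 + L0, b + b', fun x => ?_⟩
      have hrest' := hrest x
      dsimp only at hrest' ⊢
      rw [Finset.sum_insert hm, hmono x, hrest', Fin.sum_univ_succ]
      simp only [Fin.cons_zero, Fin.cons_succ, LinearMap.add_apply]
      ring


lemma brank_zero [FiniteDimensional (ZMod 2) V] : brank (0 : Bform V) = 0 := by
  unfold brank
  rw [LinearMap.range_zero]
  exact finrank_bot _ _

lemma brank_smulRight_le [FiniteDimensional (ZMod 2) V]
    (f : V →ₗ[ZMod 2] ZMod 2) (g : Module.Dual (ZMod 2) V) :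
    brank (f.smulRight g) ≤ 1 := by
  have hle : LinearMap.range (f.smulRight g) ≤ Submodule.span (ZMod 2) {g} := by
    rintro x ⟨v, rfl⟩
    rw [LinearMap.smulRight_apply]
    exact Submodule.smul_mem _ _ (Submodule.mem_span_singleton_self g)
  have h1 : finrank (ZMod 2) (Submodule.span (ZMod 2) ({g} : Set (Module.Dual (ZMod 2) V))) ≤ 1 := by
    simpa using finrank_span_le_card ({g} : Set (Module.Dual (ZMod 2) V))
  exact le_trans (Submodule.finrank_mono hle) h1

lemma brank_sum_le [FiniteDimensional (ZMod 2) V] {ι : Type} (t : Finset ι) (F : ι → Bform V) :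
    brank (∑ i ∈ t, F i) ≤ ∑ i ∈ t, brank (F i) := by
  classical
  induction t using Finset.induction with
  | empty => simp [brank_zero]
  | @insert a t' ha ih =>
      rw [Finset.sum_insert ha, Finset.sum_insert ha]
      exact le_trans (brank_add_le _ _) (by omega)

lemma exists_bform_of_hasRank2 [FiniteDimensional (ZMod 2) V]
    {q : V → ZMod 2} {s : ℕ} (h : HasRank2 q s) :
    ∃ B : Bform V, brank B ≤ 2 * s ∧ ∀ x y, B x y = q (x + y) + q x + q y + q 0 := by
  obtain ⟨L, L', L0, b, hq⟩ := h
  set B : Bform V := ∑ i : Fin s, ((L i).smulRight (L' i) + (L' i).smulRight (L i)) with hB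
  refine ⟨B, ?_, ?_⟩
  · calc brank B ≤ ∑ i : Fin s, brank ((L i).smulRight (L' i) + (L' i).smulRight (L i)) :=
        brank_sum_le _ _
      _ ≤ ∑ i : Fin s, 2 := by
          apply Finset.sum_le_sum
          intro i _
          calc brank ((L i).smulRight (L' i) + (L' i).smulRight (L i))
              ≤ brank ((L i).smulRight (L' i)) + brank ((L' i).smulRight (L i)) := brank_add_le _ _
            _ ≤ 2 := by
                have := brank_smulRight_le (L i) (L' i)
                have := brank_smulRight_le (L' i) (L i)
                omega
      _ = 2 * s := by simp [mul_comm]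
  · intro x y
    have happ : B x y = ∑ i, (L i x * L' i y + L' i x * L i y) := by
      rw [hB]
      simp [LinearMap.sum_apply, LinearMap.add_apply, LinearMap.smulRight_apply, smul_eq_mul]
    rw [happ, hq (x + y), hq x, hq y, hq 0]
    have hpt : ∀ i ∈ (Finset.univ : Finset (Fin s)), L i x * L' i y + L' i x * L i y
        = L i (x+y) * L' i (x+y) + L i x * L' i x + L i y * L' i y + L i 0 * L' i 0 := by
      intro i _
      rw [map_add (L i), map_add (L' i), map_zero (L i), map_zero (L' i)]
      exact (by decide : ∀ a b cc d : ZMod 2,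
        a * d + b * cc = (a + cc) * (b + d) + a * b + cc * d + 0 * 0) (L i x) (L' i x) (L i y) (L' i y)
    rw [Finset.sum_congr rfl hpt]
    rw [Finset.sum_add_distrib, Finset.sum_add_distrib, Finset.sum_add_distrib]
    rw [map_add L0, map_zero L0]
    have h2 : (2 : ZMod 2) = 0 := by decide
    linear_combination (-(L0 x) - L0 y - 2 * b) * h2

end Stmt9Aux


open Stmt9Aux in
/-- If `M` is a linear space of quadratic polynomials over `F_2^n` all of rank at
most `r`, then there is a subspace `V` of codimension at most `4r` on which every
`p ∈ M` restricts to an affine function. -/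
theorem stmt_9 {n : ℕ} (M : Submodule (ZMod 2) ((Fin n → ZMod 2) → ZMod 2)) (r : ℕ)
    (hquad : ∀ q ∈ M, IsPolyDegLE q 2)
    (hrank : ∀ q ∈ M, rank2 q ≤ r) :
    ∃ V : Submodule (ZMod 2) (Fin n → ZMod 2),
      n ≤ Module.finrank (ZMod 2) V + 4 * r ∧
      ∀ q ∈ M, ∃ (L : V →ₗ[ZMod 2] ZMod 2) (b : ZMod 2),
        ∀ x : V, q x = L x + b := by

  classical
  -- the canonical bilinear form associated to q ∈ M
  have hform : ∀ q ∈ M, ∃ B : Bform (Fin n → ZMod 2),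
      brank B ≤ 2 * r ∧ ∀ x y, B x y = q (x + y) + q x + q y + q 0 := by
    intro q hqM
    obtain ⟨s0, hs0⟩ := hasRank2_of_poly q (hquad q hqM)
    have hne : {k : ℕ | HasRank2 q k}.Nonempty := ⟨s0, hs0⟩
    have hmem : HasRank2 q (rank2 q) := Nat.sInf_mem hne
    obtain ⟨B, hBrk, hBeq⟩ := exists_bform_of_hasRank2 hmem
    exact ⟨B, le_trans hBrk (by have := hrank q hqM; omega), hBeq⟩
  set S : Set (Bform (Fin n → ZMod 2)) :=
    {B | ∃ q ∈ M, ∀ x y, B x y = q (x + y) + q x + q y + q 0} with hS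
  have hadd : ∀ B ∈ S, ∀ B' ∈ S, B + B' ∈ S := by
    rintro B ⟨q, hq, hB⟩ B' ⟨q', hq', hB'⟩
    refine ⟨q + q', M.add_mem hq hq', fun x y => ?_⟩
    have h1 := hB x y
    have h2 := hB' x y
    simp only [LinearMap.add_apply, Submodule.coe_add, Pi.add_apply]
    rw [h1, h2]
    abel
  have hsym : ∀ B ∈ S, ∀ x y, B x y = B y x := by
    rintro B ⟨q, hq, hB⟩ x y
    rw [hB x y, hB y x, add_comm x y]
    abel
  have hrk : ∀ B ∈ S, brank B ≤ 2 * r := by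
    rintro B ⟨q, hq, hB⟩
    obtain ⟨B', hB'rk, hB'eq⟩ := hform q hq
    have hBB' : B = B' := by
      refine LinearMap.ext fun x => LinearMap.ext fun y => ?_
      rw [hB x y, hB'eq x y]
    rw [hBB']
    exact hB'rk
  obtain ⟨W, hW1, hW2⟩ := main_induction (2 * r) (Fin n → ZMod 2) S hadd hsym hrk
  have hfr : finrank (ZMod 2) (Fin n → ZMod 2) = n := by simp
  refine ⟨W, by omega, ?_⟩
  intro q hqM
  obtain ⟨B, hBrk, hBeq⟩ := hform q hqM
  have hBS : B ∈ S := ⟨q, hqM, hBeq⟩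
  have hv : ∀ x y : W, (q : (Fin n → ZMod 2) → ZMod 2) ((x : Fin n → ZMod 2) + y) + q x + q y + q 0 = 0 := by
    intro x y
    rw [← hBeq]
    exact hW2 B hBS x y
  have key1 : ∀ a b c d : ZMod 2, a + b + c + d = 0 → a + d = (b + d) + (c + d) := by decide
  have key2 : ∀ a b : ZMod 2, a + b + b = a := by decide
  refine ⟨{ toFun := fun x => q (x : Fin n → ZMod 2) + q 0,
            map_add' := fun x y => ?_,
            map_smul' := fun c x => ?_ }, q 0, fun x => ?_⟩
  · have := hv x y
    push_cast
    exact key1 _ _ _ _ this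
  · have hc : c = 0 ∨ c = 1 := (by decide : ∀ c : ZMod 2, c = 0 ∨ c = 1) c
    rcases hc with rfl | rfl
    · simp only [zero_smul, RingHom.id_apply, smul_eq_mul, zero_mul]
      have : ((0 : W) : Fin n → ZMod 2) = 0 := rfl
      rw [this]
      exact (by decide : ∀ a : ZMod 2, a + a = 0) _
    · simp only [one_smul, RingHom.id_apply, smul_eq_mul, one_mul]
  · show (q : (Fin n → ZMod 2) → ZMod 2) x = (q (x : Fin n → ZMod 2) + q 0) + q 0
    rw [add_assoc]
    exact ((by decide : ∀ a b : ZMod 2, a = a + (b + b)) _ _)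
end

section
/- Let Q : F^n → F be a quadratic polynomial over a prime field F and let A ∈ F^{n×n} be any matrix representing Q, i.e., Q(x) = xᵗAx + ℓ(x) for some affine ℓ. Then rank₂(Q) equals the minimal rank of any matrix representing Q, and moreover rank(A + Aᵗ)/2 ≤ rank₂(Q) ≤ rank(A + Aᵗ). -/
open Finset

/-- The matrix `A` represents the quadratic `Q` if `Q(x) = xᵗAx + ℓ(x)` for some
affine `ℓ`. -/
def Represents {K : Type*} [Field K] {n : ℕ} (A : Matrix (Fin n) (Fin n) K)
    (Q : (Fin n → K) → K) : Prop :=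
  ∃ (L0 : (Fin n → K) →ₗ[K] K) (b : K),
    ∀ x, Q x = (∑ i, ∑ j, x i * A i j * x j) + L0 x + b

section Aux
variable {K : Type*} [Field K] {n : ℕ}

/-- linear form from a coefficient vector -/
noncomputable def lf (v : Fin n → K) : (Fin n → K) →ₗ[K] K :=
  ∑ i, v i • LinearMap.proj i

@[simp] lemma lf_apply (v x : Fin n → K) : lf v x = ∑ i, v i * x i := by
  simp [lf, LinearMap.sum_apply]

variable {M : Type*} [AddCommGroup M] [Module K M]

lemma HasRank2.succ {q : M → K} {r : ℕ} (h : HasRank2 q r) : HasRank2 q (r + 1) := by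
  obtain ⟨L, L', L0, b, hq⟩ := h
  refine ⟨Fin.snoc L 0, Fin.snoc L' 0, L0, b, fun x => ?_⟩
  rw [hq x]
  congr 1; congr 1
  rw [Fin.sum_univ_castSucc]
  simp

lemma HasRank2.mono {q : M → K} {r s : ℕ} (h : HasRank2 q r) (hrs : r ≤ s) :
    HasRank2 q s := by
  induction s with
  | zero => simpa [Nat.le_zero.mp hrs] using h
  | succ k ih =>
    rcases Nat.lt_or_ge r (k+1) with h1 | h1
    · exact (ih (Nat.lt_succ_iff.mp h1)).succ
    · have : r = k + 1 := le_antisymm hrs h1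
      subst this; exact h

lemma HasRank2.shift {q Q : M → K} {r : ℕ} (h : HasRank2 q r)
    (L1 : M →ₗ[K] K) (c : K) (hQ : ∀ x, Q x = q x + L1 x + c) : HasRank2 Q r := by
  obtain ⟨L, L', L0, b, hq⟩ := h
  refine ⟨L, L', L0 + L1, b + c, fun x => ?_⟩
  rw [hQ x, hq x]
  simp; ring

end Aux


section RankAux
variable {K : Type*} [Field K] {n : ℕ}

lemma rank_succ_le_of_ker (M N : Matrix (Fin n) (Fin n) K)
    (h1 : ∀ x, M.mulVec x = 0 → N.mulVec x = 0)
    (v : Fin n → K) (h2 : N.mulVec v = 0) (h3 : M.mulVec v ≠ 0) :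
    N.rank + 1 ≤ M.rank := by
  have hlt : LinearMap.ker M.mulVecLin < LinearMap.ker N.mulVecLin := by
    refine lt_of_le_of_ne (fun x hx => ?_) (fun h => h3 ?_)
    · exact h1 x hx
    · have : v ∈ LinearMap.ker M.mulVecLin := by rw [h]; exact h2
      exact this
  have hdim := Submodule.finrank_lt_finrank_of_lt hlt
  have e1 := LinearMap.finrank_range_add_finrank_ker M.mulVecLin
  have e2 := LinearMap.finrank_range_add_finrank_ker N.mulVecLin
  have hfin : Module.finrank K (Fin n → K) = n := Module.finrank_fin_fun K
  rw [hfin] at e1 e2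
  unfold Matrix.rank
  omega

lemma rank_zero_eq (M : Matrix (Fin n) (Fin n) K) (h : M.rank = 0) : M = 0 := by
  have : LinearMap.range M.mulVecLin = ⊥ := Submodule.finrank_eq_zero.mp h
  have h2 : M.mulVecLin = 0 := LinearMap.range_eq_bot.mp this
  ext i j
  have := congrArg (fun f => (f (Pi.single j 1)) i) h2
  simpa [Matrix.mulVecLin, Matrix.mulVec_single] using this

end RankAux


lemma zmod2_sq : ∀ a y : ZMod 2, a * (y * y) = a * y := by decide

lemma zmod_sq {p : ℕ} [Fact p.Prime] (a y : ZMod p) (h : a + a = 0) :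
    a * (y * y) = a * y := by
  rcases eq_or_ne a 0 with rfl | ha
  · simp
  · have h2 : (2 : ZMod p) * a = 0 := by linear_combination h
    have h2' : (2 : ZMod p) = 0 := by
      rcases mul_eq_zero.mp h2 with h' | h'
      · exact h'
      · exact absurd h' ha
    have hp : p ∣ 2 := by
      have : ((2 : ℕ) : ZMod p) = 0 := by exact_mod_cast h2'
      exact (ZMod.natCast_eq_zero_iff 2 p).mp this
    have hpe : p = 2 := (Nat.prime_dvd_prime_iff_eq Fact.out Nat.prime_two).mp hp
    subst hpe
    exact zmod2_sq a y

lemma base_affine {p n : ℕ} [Fact p.Prime] (A : Matrix (Fin n) (Fin n) (ZMod p))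
    (hM : A + A.transpose = 0) (x : Fin n → ZMod p) :
    ∑ i, ∑ j, x i * A i j * x j = ∑ i, A i i * x i := by
  have hAij : ∀ i j, A i j + A j i = 0 := by
    intro i j
    have := congrFun (congrFun hM i) j
    simpa [Matrix.transpose] using this
  rw [← Finset.sum_product']
  rw [← Finset.diag_union_offDiag, Finset.sum_union (Finset.disjoint_diag_offDiag _)]
  have hoff : ∑ q ∈ (univ : Finset (Fin n)).offDiag, x q.1 * A q.1 q.2 * x q.2 = 0 := by
    refine Finset.sum_involution (fun q _ => q.swap) ?_ ?_ ?_ ?_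
    · intro q _
      have := hAij q.1 q.2
      simp only [Prod.fst_swap, Prod.snd_swap]
      linear_combination x q.1 * x q.2 * this
    · intro q hq _
      simp only [Finset.mem_offDiag] at hq
      intro hsw
      exact hq.2.2 (congrArg Prod.snd hsw)
    · intro q hq
      simp only [Finset.mem_offDiag] at hq ⊢
      exact ⟨hq.2.1, hq.1, hq.2.2.symm⟩
    · intro q _; simp
  rw [hoff, add_zero]
  refine Finset.sum_bij' (fun q _ => q.1) (fun a _ => (a, a)) ?_ ?_ ?_ ?_ ?_
  · intros; simp
  · intro a _; simp
  · rintro ⟨i, j⟩ hq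
    simp only [Finset.mem_diag] at hq
    simp [hq.2]
  · intro a _; rfl
  · rintro ⟨i, j⟩ hq
    simp only [Finset.mem_diag] at hq
    obtain ⟨_, h2⟩ := hq
    subst h2
    have := zmod_sq (A i i) (x i) (hAij i i)
    linear_combination this

lemma step_sum {K : Type*} [Field K] {n : ℕ} (A : Matrix (Fin n) (Fin n) K)
    (u w : Fin n → K) (s : K) (x : Fin n → K) :
    ∑ i, ∑ j, x i * (A i j - s * (u i * w j)) * x j
      = (∑ i, ∑ j, x i * A i j * x j)
        - s * ((∑ i, u i * x i) * (∑ j, w j * x j)) := by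
  rw [Finset.sum_mul_sum, Finset.mul_sum, ← Finset.sum_sub_distrib]
  refine Finset.sum_congr rfl fun i _ => ?_
  rw [Finset.mul_sum, ← Finset.sum_sub_distrib]
  exact Finset.sum_congr rfl fun j _ => by ring

lemma reduce_step {K : Type*} [Field K] {n : ℕ} (r : ℕ)
    (ih : ∀ B : Matrix (Fin n) (Fin n) K, (B + B.transpose).rank ≤ r →
      HasRank2 (fun x : Fin n → K => ∑ i, ∑ j, x i * B i j * x j) r)
    (A : Matrix (Fin n) (Fin n) K) (hr : (A + A.transpose).rank ≤ r + 1)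
    (i j : Fin n) (s : K)
    (hP2 : ∀ k, s * ((A + A.transpose) k i * (A + A.transpose) i j
        + (A + A.transpose) k j * (A + A.transpose) i i) = (A + A.transpose) k i)
    (hne : (A + A.transpose) i j ≠ 0) :
    HasRank2 (fun x : Fin n → K => ∑ a, ∑ b, x a * A a b * x b) (r + 1) := by
  set M := A + A.transpose with hMdef
  have hsymm : ∀ k l, M k l = M l k := by
    intro k l
    simp [hMdef, Matrix.add_apply, Matrix.transpose_apply, add_comm]
  set u : Fin n → K := fun k => M k i with hu
  set w : Fin n → K := fun k => M k j with hw
  set A' : Matrix (Fin n) (Fin n) K := Matrix.of (fun k l => A k l - s * (u k * w l)) with hA'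
  have hN : ∀ k l, (A' + A'.transpose) k l = M k l - s * (u k * w l + w k * u l) := by
    intro k l
    simp only [hA', Matrix.add_apply, Matrix.transpose_apply, Matrix.of_apply, hMdef]
    ring
  -- mulVec formulas
  have hmv : ∀ (B : Matrix (Fin n) (Fin n) K) (y : Fin n → K) (k : Fin n),
      B.mulVec y k = ∑ l, B k l * y l := by
    intro B y k
    simp [Matrix.mulVec, dotProduct]
  have hdots : ∀ (y : Fin n → K), M.mulVec y = 0 →
      (∑ l, u l * y l = 0 ∧ ∑ l, w l * y l = 0) := by
    intro y hy
    constructor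
    · have := congrFun hy i
      rw [hmv] at this
      simp only [Pi.zero_apply] at this
      rw [← this]
      exact Finset.sum_congr rfl fun l _ => by show M l i * y l = M i l * y l; rw [hsymm l i]
    · have := congrFun hy j
      rw [hmv] at this
      simp only [Pi.zero_apply] at this
      rw [← this]
      exact Finset.sum_congr rfl fun l _ => by show M l j * y l = M j l * y l; rw [hsymm l j]
  have hrankN : (A' + A'.transpose).rank ≤ r := by
    have hstep : (A' + A'.transpose).rank + 1 ≤ M.rank := by
      refine rank_succ_le_of_ker M _ ?_ (Pi.single i 1) ?_ ?_
      · intro y hy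
        obtain ⟨hd1, hd2⟩ := hdots y hy
        funext k
        rw [hmv]
        simp only [Pi.zero_apply]
        have : ∀ l, (A' + A'.transpose) k l * y l
            = M k l * y l - s * (u k * (w l * y l) + w k * (u l * y l)) := by
          intro l; rw [hN]; ring
        rw [Finset.sum_congr rfl fun l _ => this l]
        rw [Finset.sum_sub_distrib]
        have hMy : ∑ l, M k l * y l = 0 := by
          rw [← hmv, hy]; rfl
        rw [hMy, ← Finset.mul_sum]
        have h5 : ∑ l, (u k * (w l * y l) + w k * (u l * y l))
            = u k * (∑ l, w l * y l) + w k * (∑ l, u l * y l) := by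
          rw [Finset.sum_add_distrib, Finset.mul_sum, Finset.mul_sum]
        rw [h5, hd1, hd2]
        simp
      · funext k
        rw [hmv]
        simp only [Pi.zero_apply]
        have : ∀ l, (A' + A'.transpose) k l * (Pi.single i 1 : Fin n → K) l
            = if l = i then M k i - s * (u k * w i + w k * u i) else 0 := by
          intro l
          by_cases h : l = i
          · subst h; simp [hN]
          · simp [Pi.single_apply, h]
        rw [Finset.sum_congr rfl fun l _ => this l]
        rw [Finset.sum_ite_eq' univ i]
        simp only [Finset.mem_univ, if_true]
        have h6 := hP2 k
        rw [hu, hw]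
        linear_combination -h6
      · intro h
        have := congrFun h j
        rw [hmv] at this
        have h2 : ∑ l, M j l * (Pi.single i 1 : Fin n → K) l = M j i := by
          simp [Pi.single_apply, mul_ite]
        rw [h2] at this
        exact hne (by rw [hsymm i j]; exact this)
    omega
  obtain ⟨L, L', L0, b, hq⟩ := ih A' hrankN
  refine ⟨Fin.snoc L (s • lf u), Fin.snoc L' (lf w), L0, b, fun x => ?_⟩
  rw [Fin.sum_univ_castSucc]
  simp only [Fin.snoc_castSucc, Fin.snoc_last, LinearMap.smul_apply, lf_apply, smul_eq_mul]
  have hqx := hq x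
  simp only [hA', Matrix.of_apply] at hqx
  rw [step_sum] at hqx
  have : ∑ a, ∑ b, x a * A a b * x b
      = ((∑ a, ∑ b, x a * A a b * x b) - s * ((∑ a, u a * x a) * (∑ b, w b * x b)))
        + s * ((∑ a, u a * x a) * (∑ b, w b * x b)) := by ring
  rw [this, hqx]
  ring

section Exchange
variable {K : Type*} [CommRing K] {n r : ℕ}

lemma exchange1 (f g : Fin r → Fin n → K) (y : Fin n → K) (a : Fin n) :
    ∑ b, (∑ k, f k a * g k b) * y b = ∑ k, f k a * (∑ b, g k b * y b) := by
  have h : ∀ b : Fin n, (∑ k, f k a * g k b) * y b = ∑ k, f k a * (g k b * y b) := by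
    intro b
    rw [Finset.sum_mul]
    exact Finset.sum_congr rfl fun k _ => by ring
  rw [Finset.sum_congr rfl fun b _ => h b, Finset.sum_comm]
  exact Finset.sum_congr rfl fun k _ => by rw [Finset.mul_sum]

lemma exchange (f g : Fin r → Fin n → K) (x y : Fin n → K) :
    ∑ a, ∑ b, x a * (∑ k, f k a * g k b) * y b
      = ∑ k, (∑ a, f k a * x a) * (∑ b, g k b * y b) := by
  have h : ∀ a, ∑ b, x a * (∑ k, f k a * g k b) * y b
      = ∑ k, (f k a * x a) * (∑ b, g k b * y b) := by
    intro a
    have h2 : ∀ b, x a * (∑ k, f k a * g k b) * y b = (∑ k, f k a * g k b) * y b * x a := by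
      intro b; ring
    rw [Finset.sum_congr rfl fun b _ => h2 b, ← Finset.sum_mul, exchange1 f g y a,
      Finset.sum_mul]
    exact Finset.sum_congr rfl fun k _ => by ring
  rw [Finset.sum_congr rfl fun a _ => h a, Finset.sum_comm]
  refine Finset.sum_congr rfl fun k _ => ?_
  rw [Finset.sum_mul]

end Exchange

section More
variable {K : Type*} [Field K] {n : ℕ}

lemma qsingle (A : Matrix (Fin n) (Fin n) K) (i j : Fin n) :
    ∑ a, ∑ b, (Pi.single i 1 : Fin n → K) a * A a b * (Pi.single j 1 : Fin n → K) b
      = A i j := by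
  simp [Pi.single_apply, mul_ite, ite_mul, Finset.sum_ite_eq]

lemma qadd (A : Matrix (Fin n) (Fin n) K) (x y : Fin n → K) :
    ∑ a, ∑ b, (x + y) a * A a b * (x + y) b
      = (∑ a, ∑ b, x a * A a b * x b) + (∑ a, ∑ b, y a * A a b * y b)
        + ((∑ a, ∑ b, x a * A a b * y b) + (∑ a, ∑ b, y a * A a b * x b)) := by
  have h : ∀ a b : Fin n, (x + y) a * A a b * (x + y) b
      = x a * A a b * x b + y a * A a b * y b + (x a * A a b * y b + y a * A a b * x b) := by
    intro a b; simp only [Pi.add_apply]; ring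
  calc ∑ a, ∑ b, (x + y) a * A a b * (x + y) b
      = ∑ a, ∑ b, (x a * A a b * x b + y a * A a b * y b
          + (x a * A a b * y b + y a * A a b * x b)) := by
        exact Finset.sum_congr rfl fun a _ => Finset.sum_congr rfl fun b _ => h a b
    _ = _ := by
        simp only [Finset.sum_add_distrib]

lemma qzero (A : Matrix (Fin n) (Fin n) K) :
    ∑ a, ∑ b, (0 : Fin n → K) a * A a b * (0 : Fin n → K) b = 0 := by
  simp

lemma represents_unique {Q : (Fin n → K) → K} (A B : Matrix (Fin n) (Fin n) K)
    (hA : Represents A Q) (hB : Represents B Q) :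
    A + A.transpose = B + B.transpose := by
  obtain ⟨L1, b1, h1⟩ := hA
  obtain ⟨L2, b2, h2⟩ := hB
  have hq : ∀ x, (∑ a, ∑ b, x a * A a b * x b)
      = (∑ a, ∑ b, x a * B a b * x b) + (L2 x - L1 x) + (b2 - b1) := by
    intro x
    have := (h1 x).symm.trans (h2 x)
    linear_combination this
  have h0 : b2 - b1 = 0 := by
    have := hq 0
    simp only [qzero, map_zero] at this
    linear_combination -this
  ext i j
  simp only [Matrix.add_apply, Matrix.transpose_apply]
  have hii := hq (Pi.single i 1)
  have hjj := hq (Pi.single j 1)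
  have hij := hq (Pi.single i 1 + Pi.single j 1)
  rw [qadd A, qadd B] at hij
  simp only [qsingle] at hii hjj hij
  rw [map_add, map_add] at hij
  linear_combination hij - hii - hjj - h0

lemma construct_matrix {Q : (Fin n → K) → K} {r : ℕ} (h : HasRank2 Q r) :
    ∃ B : Matrix (Fin n) (Fin n) K, Represents B Q ∧ B.rank ≤ r := by
  classical
  obtain ⟨L, L', L0, b, hq⟩ := h
  set e : Fin n → (Fin n → K) := fun a => fun j => if a = j then 1 else 0 with he
  set f : Fin r → Fin n → K := fun k a => L k (e a) with hf
  set g : Fin r → Fin n → K := fun k bb => L' k (e bb) with hg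
  set B : Matrix (Fin n) (Fin n) K := Matrix.of (fun a bb => ∑ k, f k a * g k bb) with hBdef
  have happ : ∀ (T : (Fin n → K) →ₗ[K] K) (x : Fin n → K), T x = ∑ a, T (e a) * x a := by
    intro T x
    rw [LinearMap.pi_apply_eq_sum_univ T x]
    exact Finset.sum_congr rfl fun a _ => by rw [smul_eq_mul]; ring
  have hsum : ∀ x : Fin n → K, ∑ a, ∑ bb, x a * B a bb * x bb = ∑ k, L k x * L' k x := by
    intro x
    have := exchange f g x x
    simp only [hBdef, Matrix.of_apply]
    rw [this]
    refine Finset.sum_congr rfl fun k _ => ?_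
    rw [happ (L k) x, happ (L' k) x]
  refine ⟨B, ⟨L0, b, fun x => by rw [hq x, hsum x]⟩, ?_⟩
  -- rank bound
  have hmulvec : ∀ y : Fin n → K, B.mulVec y = ∑ k, (∑ bb, g k bb * y bb) • f k := by
    intro y
    funext a
    have h1 : B.mulVec y a = ∑ bb, (∑ k, f k a * g k bb) * y bb := by
      simp [Matrix.mulVec, dotProduct, hBdef]
    rw [h1, exchange1 f g y a]
    simp only [Finset.sum_apply, Pi.smul_apply, smul_eq_mul]
    exact Finset.sum_congr rfl fun k _ => by ring
  have hrange : LinearMap.range B.mulVecLin ≤ Submodule.span K (Set.range f) := by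
    rintro v ⟨y, rfl⟩
    rw [Matrix.mulVecLin_apply, hmulvec y]
    exact Submodule.sum_mem _ fun k _ =>
      Submodule.smul_mem _ _ (Submodule.subset_span ⟨k, rfl⟩)
  have h1 : B.rank ≤ Module.finrank K (Submodule.span K (Set.range f)) :=
    Submodule.finrank_mono hrange
  have h2 : Module.finrank K (Submodule.span K (Set.range f)) ≤ r := by
    refine le_trans (finrank_span_le_card (Set.range f)) ?_
    rw [Set.toFinset_range]
    exact le_trans (Finset.card_image_le) (by simp)
  exact le_trans h1 h2

lemma decompose_matrix (B : Matrix (Fin n) (Fin n) K) {Q : (Fin n → K) → K}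
    (hB : Represents B Q) : HasRank2 Q B.rank := by
  obtain ⟨L0, b, hq⟩ := hB
  set W := LinearMap.range B.mulVecLin with hW
  have hfr : Module.finrank K W = B.rank := rfl
  set β : Module.Basis (Fin B.rank) K W := Module.finBasisOfFinrankEq K W hfr with hβ
  have hcolmem : ∀ bb : Fin n, B.mulVec (Pi.single bb 1) ∈ W := fun bb => ⟨Pi.single bb 1, rfl⟩
  set col : Fin n → W := fun bb => ⟨B.mulVec (Pi.single bb 1), hcolmem bb⟩ with hcol
  set D : Fin B.rank → Fin n → K := fun k bb => β.repr (col bb) k with hD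
  set C : Fin B.rank → Fin n → K := fun k a => ((β k : W) : Fin n → K) a with hC
  have hBeq : ∀ a bb, B a bb = ∑ k, C k a * D k bb := by
    intro a bb
    have h1 := β.sum_repr (col bb)
    have h2 := congrArg (fun v : W => (v : Fin n → K) a) h1
    simp only [AddSubmonoidClass.coe_finset_sum, SetLike.val_smul, Finset.sum_apply,
      Pi.smul_apply, smul_eq_mul] at h2
    have h3 : B.mulVec (Pi.single bb 1) a = B a bb := by
      simp [Matrix.mulVec, dotProduct, Pi.single_apply, mul_ite]
    change _ = B.mulVec (Pi.single bb 1) a at h2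
    rw [h3] at h2
    rw [← h2]
    exact Finset.sum_congr rfl fun k _ => by rw [hD, hC]; ring
  refine ⟨fun k => lf (C k), fun k => lf (D k), L0, b, fun x => ?_⟩
  rw [hq x]
  congr 1
  congr 1
  have h4 : ∀ a bb, x a * B a bb * x bb = x a * (∑ k, C k a * D k bb) * x bb := by
    intro a bb; rw [hBeq a bb]
  rw [Finset.sum_congr rfl fun a _ => Finset.sum_congr rfl fun bb _ => h4 a bb]
  rw [exchange C D x x]
  refine Finset.sum_congr rfl fun k _ => ?_
  simp only [lf_apply]

lemma rank_add_le' (M N : Matrix (Fin n) (Fin n) K) :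
    (M + N).rank ≤ M.rank + N.rank := by
  have hle : LinearMap.range (M + N).mulVecLin
      ≤ LinearMap.range M.mulVecLin ⊔ LinearMap.range N.mulVecLin := by
    rintro v ⟨y, rfl⟩
    rw [Matrix.mulVecLin_apply, Matrix.add_mulVec]
    exact Submodule.add_mem_sup ⟨y, rfl⟩ ⟨y, rfl⟩
  refine le_trans (Submodule.finrank_mono hle) ?_
  exact Submodule.finrank_add_le_finrank_add_finrank _ _

end More


lemma key_rank2 {p n : ℕ} [Fact p.Prime] :
    ∀ (r : ℕ) (A : Matrix (Fin n) (Fin n) (ZMod p)), (A + A.transpose).rank ≤ r →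
      HasRank2 (fun x : Fin n → ZMod p => ∑ i, ∑ j, x i * A i j * x j) r := by
  intro r
  induction r with
  | zero =>
      intro A h
      have hM : A + A.transpose = 0 := rank_zero_eq _ (Nat.le_zero.mp h)
      exact ⟨fun i => i.elim0, fun i => i.elim0, lf (fun i => A i i), 0, fun x => by
        simp [base_affine A hM x]⟩
  | succ r ih =>
      intro A hr
      by_cases hM0 : A + A.transpose = 0
      · have h0 : HasRank2 (fun x : Fin n → ZMod p => ∑ i, ∑ j, x i * A i j * x j) 0 :=
          ⟨fun i => i.elim0, fun i => i.elim0, lf (fun i => A i i), 0, fun x => by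
            simp [base_affine A hM0 x]⟩
        exact h0.mono (Nat.zero_le _)
      · by_cases hd : ∃ k, (A + A.transpose) k k ≠ 0
        · obtain ⟨k, hk⟩ := hd
          have h2 : (2 : ZMod p) ≠ 0 := by
            intro h2
            apply hk
            have hAk : (A + A.transpose) k k = 2 * A k k := by
              simp only [Matrix.add_apply, Matrix.transpose_apply]; ring
            rw [hAk, h2, zero_mul]
          have h2c : 2 * (A + A.transpose) k k ≠ 0 := mul_ne_zero h2 hk
          refine reduce_step r ih A hr k k (2 * (A + A.transpose) k k)⁻¹ ?_ hk
          intro l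
          have hrw : (2 * (A + A.transpose) k k)⁻¹ * ((A + A.transpose) l k * (A + A.transpose) k k
              + (A + A.transpose) l k * (A + A.transpose) k k)
              = (A + A.transpose) l k * ((2 * (A + A.transpose) k k)⁻¹
                * (2 * (A + A.transpose) k k)) := by ring
          rw [hrw, inv_mul_cancel₀ h2c, mul_one]
        · push_neg at hd
          have hex : ∃ i j, (A + A.transpose) i j ≠ 0 := by
            by_contra hc
            push_neg at hc
            exact hM0 (by ext i j; simpa using hc i j)
          obtain ⟨i, j, hij⟩ := hex
          refine reduce_step r ih A hr i j ((A + A.transpose) i j)⁻¹ ?_ hij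
          intro l
          rw [hd i]
          have hrw : ((A + A.transpose) i j)⁻¹ * ((A + A.transpose) l i * (A + A.transpose) i j
              + (A + A.transpose) l j * 0)
              = (A + A.transpose) l i * (((A + A.transpose) i j)⁻¹ * (A + A.transpose) i j) := by
            ring
          rw [hrw, inv_mul_cancel₀ hij, mul_one]

/-- `rank₂(Q)` equals the minimal rank of any matrix representing `Q`, and for any
matrix `A` representing `Q`, `rank(A+Aᵗ)/2 ≤ rank₂(Q) ≤ rank(A+Aᵗ)`. -/
theorem stmt_14 {p n : ℕ} [Fact p.Prime] (Q : (Fin n → ZMod p) → ZMod p)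
    (A : Matrix (Fin n) (Fin n) (ZMod p)) (hA : Represents A Q) :
    rank2 Q = sInf {r | ∃ B : Matrix (Fin n) (Fin n) (ZMod p),
      Represents B Q ∧ B.rank = r} ∧
    (A + A.transpose).rank ≤ 2 * rank2 Q ∧
    rank2 Q ≤ (A + A.transpose).rank := by
  obtain ⟨L0A, bA, hQA⟩ := id hA
  have hkey := key_rank2 ((A + A.transpose).rank) A le_rfl
  have hQr : HasRank2 Q ((A + A.transpose).rank) := hkey.shift L0A bA hQA
  have hS1ne : {r | HasRank2 Q r}.Nonempty := ⟨_, hQr⟩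
  have hr2mem : HasRank2 Q (rank2 Q) := Nat.sInf_mem hS1ne
  obtain ⟨B0, hB0rep, hB0rank⟩ := construct_matrix hr2mem
  have hthird : rank2 Q ≤ (A + A.transpose).rank := Nat.sInf_le hQr
  have hsecond : (A + A.transpose).rank ≤ 2 * rank2 Q := by
    have huniq : A + A.transpose = B0 + B0.transpose := represents_unique A B0 hA hB0rep
    rw [huniq]
    calc (B0 + B0.transpose).rank ≤ B0.rank + B0.transpose.rank := rank_add_le' _ _
      _ = B0.rank + B0.rank := by rw [Matrix.rank_transpose]
      _ ≤ 2 * rank2 Q := by omega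
  have hfirst : rank2 Q = sInf {r | ∃ B : Matrix (Fin n) (Fin n) (ZMod p),
      Represents B Q ∧ B.rank = r} := by
    apply le_antisymm
    · have hne2 : {r | ∃ B : Matrix (Fin n) (Fin n) (ZMod p),
          Represents B Q ∧ B.rank = r}.Nonempty := ⟨A.rank, A, hA, rfl⟩
      obtain ⟨B1, hB1, hB1r⟩ := Nat.sInf_mem hne2
      have hd := decompose_matrix B1 hB1
      calc rank2 Q ≤ B1.rank := Nat.sInf_le hd
        _ = _ := hB1r
    · exact le_trans (Nat.sInf_le ⟨B0, hB0rep, rfl⟩) hB0rank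
  exact ⟨hfirst, hsecond, hthird⟩
end

section
/- Let F : F^d → F be a polynomial such that deg(F(α+β) − F(α) − F(β)) ≤ 2 as a polynomial in the 2d variables (α, β). Then deg(F) ≤ 2. -/
set_option linter.unusedSectionVars false

open Finset

namespace Stmt17Aux

open MvPolynomial

/-- Exponent reduction: `rd p e` is the canonical exponent with `a ^ e = a ^ rd p e`. -/
def rd (p e : ℕ) : ℕ := if e = 0 then 0 else (e - 1) % (p - 1) + 1

theorem rd_zero (p : ℕ) : rd p 0 = 0 := rfl

theorem rd_le (p e : ℕ) : rd p e ≤ e := by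
  unfold rd
  split
  · omega
  · have := Nat.mod_le (e - 1) (p - 1); omega

theorem rd_le_sub (p : ℕ) (hp : 1 < p) (e : ℕ) : rd p e ≤ p - 1 := by
  unfold rd
  split
  · omega
  · have : (e - 1) % (p - 1) < p - 1 := Nat.mod_lt _ (by omega)
    omega

theorem pow_rd {p : ℕ} [Fact p.Prime] (a : ZMod p) (e : ℕ) : a ^ e = a ^ rd p e := by
  have hp : 1 < p := (Fact.out : p.Prime).one_lt
  rcases eq_or_ne e 0 with he | he
  · simp [he, rd]
  · have hrd : rd p e = (e - 1) % (p - 1) + 1 := if_neg he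
    rcases eq_or_ne a 0 with ha | ha
    · rw [ha, zero_pow he, zero_pow (by omega)]
    · have h1 : a ^ (p - 1) = 1 := ZMod.pow_card_sub_one_eq_one ha
      have h2 : e = (p - 1) * ((e - 1) / (p - 1)) + ((e - 1) % (p - 1) + 1) := by
        have := Nat.div_add_mod (e - 1) (p - 1); omega
      calc a ^ e = a ^ ((p - 1) * ((e - 1) / (p - 1)) + ((e - 1) % (p - 1) + 1)) := by rw [← h2]
        _ = (a ^ (p - 1)) ^ ((e - 1) / (p - 1)) * a ^ ((e - 1) % (p - 1) + 1) := by
            rw [pow_add, pow_mul]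
        _ = a ^ rd p e := by rw [h1, one_pow, one_mul, hrd]

variable {p : ℕ} [Fact p.Prime] {σ : Type*} [DecidableEq σ]

/-- Reduce all exponents of a polynomial over `ZMod p` to be at most `p - 1`,
preserving the induced polynomial function. -/
noncomputable def reduceP (Q : MvPolynomial σ (ZMod p)) : MvPolynomial σ (ZMod p) :=
  ∑ e ∈ Q.support, monomial (Finsupp.mapRange (rd p) (rd_zero p) e) (coeff e Q)

theorem eval_reduceP (Q : MvPolynomial σ (ZMod p)) (x : σ → ZMod p) :
    eval x (reduceP Q) = eval x Q := by
  conv_rhs => rw [Q.as_sum]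
  rw [reduceP, map_sum, map_sum]
  refine Finset.sum_congr rfl fun e _ => ?_
  rw [eval_monomial, eval_monomial]
  congr 1
  rw [Finsupp.prod_mapRange_index (fun a => pow_zero _)]
  exact Finsupp.prod_congr fun j _ => (pow_rd (x j) (e j)).symm

theorem totalDegree_reduceP_le (Q : MvPolynomial σ (ZMod p)) :
    (reduceP Q).totalDegree ≤ Q.totalDegree := by
  refine (totalDegree_finset_sum _ _).trans (Finset.sup_le fun e he => ?_)
  refine (totalDegree_monomial_le _ _).trans ?_
  refine le_trans ?_ (le_totalDegree he)
  rw [Finsupp.sum_mapRange_index (fun a => rfl)]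
  exact Finset.sum_le_sum fun j _ => rd_le p (e j)

theorem support_reduceP (Q : MvPolynomial σ (ZMod p)) :
    ∀ m ∈ (reduceP Q).support, ∀ i, m i ≤ p - 1 := by
  intro m hm i
  have hp : 1 < p := (Fact.out : p.Prime).one_lt
  have := MvPolynomial.support_sum hm
  rw [Finset.mem_biUnion] at this
  obtain ⟨e, _, hme⟩ := this
  have := support_monomial_subset hme
  rw [Finset.mem_singleton] at this
  subst this
  simp only [Finsupp.mapRange_apply]
  exact rd_le_sub p hp _

end Stmt17Aux

namespace Stmt17Aux

open MvPolynomial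

variable {p d : ℕ} [Fact p.Prime]

/-- The substitution `x_j ↦ α_j + β_j`. -/
noncomputable def psi (P : MvPolynomial (Fin d) (ZMod p)) :
    MvPolynomial (Fin d ⊕ Fin d) (ZMod p) :=
  aeval (fun j => X (Sum.inl j) + X (Sum.inr j)) P

@[simp] theorem mdinl_inl (a : Fin d →₀ ℕ) (k : Fin d) :
    Finsupp.mapDomain (Sum.inl : Fin d → Fin d ⊕ Fin d) a (Sum.inl k) = a k :=
  Finsupp.mapDomain_apply Sum.inl_injective _ _

@[simp] theorem mdinl_inr (a : Fin d →₀ ℕ) (k : Fin d) :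
    Finsupp.mapDomain (Sum.inl : Fin d → Fin d ⊕ Fin d) a (Sum.inr k) = 0 :=
  Finsupp.mapDomain_notin_range _ _ (by simp)

@[simp] theorem mdinr_inr (a : Fin d →₀ ℕ) (k : Fin d) :
    Finsupp.mapDomain (Sum.inr : Fin d → Fin d ⊕ Fin d) a (Sum.inr k) = a k :=
  Finsupp.mapDomain_apply Sum.inr_injective _ _

@[simp] theorem mdinr_inl (a : Fin d →₀ ℕ) (k : Fin d) :
    Finsupp.mapDomain (Sum.inr : Fin d → Fin d ⊕ Fin d) a (Sum.inl k) = 0 :=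
  Finsupp.mapDomain_notin_range _ _ (by simp)

theorem psi_mul_X (q : MvPolynomial (Fin d) (ZMod p)) (j : Fin d) :
    psi (q * X j) = psi q * X (Sum.inl j) + psi q * X (Sum.inr j) := by
  rw [psi, map_mul, aeval_X, psi, mul_add]

theorem eval_psi (P : MvPolynomial (Fin d) (ZMod p)) (x : (Fin d ⊕ Fin d) → ZMod p) :
    eval x (psi P) = eval (fun i => x (Sum.inl i) + x (Sum.inr i)) P := by
  induction P using MvPolynomial.induction_on with
  | C c => simp [psi]
  | add f g hf hg => rw [psi, map_add, map_add, map_add, ← psi, ← psi, hf, hg]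
  | mul_X q j hq => rw [psi, map_mul, aeval_X, map_mul, ← psi, hq, map_mul, eval_X]; simp

theorem mapDomain_inl_eq_zero_iff (a : Fin d →₀ ℕ) :
    Finsupp.mapDomain (Sum.inl : Fin d → Fin d ⊕ Fin d) a = 0 ↔ a = 0 := by
  constructor
  · intro h
    ext k
    have := congrArg (fun g => g (Sum.inl k)) h
    simpa using this
  · intro h; simp [h]

theorem mdinl_sub_single (a : Fin d →₀ ℕ) (j : Fin d) :
    Finsupp.mapDomain (Sum.inl : Fin d → Fin d ⊕ Fin d) a - Finsupp.single (Sum.inl j) 1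
      = Finsupp.mapDomain Sum.inl (a - Finsupp.single j 1) := by
  ext s
  cases s with
  | inl k => simp [Finsupp.tsub_apply, Finsupp.single_apply, Sum.inl.injEq]
  | inr k => simp [Finsupp.tsub_apply, Finsupp.single_apply]

theorem coeff_psi_inl (P : MvPolynomial (Fin d) (ZMod p)) :
    ∀ a : Fin d →₀ ℕ, coeff (Finsupp.mapDomain Sum.inl a) (psi P) = coeff a P := by
  classical
  induction P using MvPolynomial.induction_on with
  | C c =>
    intro a
    rw [psi, aeval_C, algebraMap_eq, coeff_C, coeff_C]
    by_cases ha : a = 0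
    · simp [ha]
    · have h1 : ¬(0 : (Fin d ⊕ Fin d) →₀ ℕ) = Finsupp.mapDomain Sum.inl a := by
        intro h
        exact ha ((mapDomain_inl_eq_zero_iff a).mp h.symm)
      rw [if_neg h1, if_neg (fun h => ha h.symm)]
  | add f g hf hg =>
    intro a
    rw [psi, map_add, coeff_add, ← psi, ← psi, hf, hg, coeff_add]
  | mul_X q j hq =>
    intro a
    rw [psi_mul_X, coeff_add, coeff_mul_X', coeff_mul_X', coeff_mul_X']
    have hinr : Sum.inr j ∉ (Finsupp.mapDomain (Sum.inl : Fin d → Fin d ⊕ Fin d) a).support := by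
      simp [Finsupp.mem_support_iff]
    rw [if_neg hinr, add_zero]
    by_cases hj : j ∈ a.support
    · have h1 : Sum.inl j ∈ (Finsupp.mapDomain (Sum.inl : Fin d → Fin d ⊕ Fin d) a).support := by
        simpa [Finsupp.mem_support_iff] using hj
      rw [if_pos h1, if_pos hj, mdinl_sub_single, hq _]
    · have h1 : Sum.inl j ∉ (Finsupp.mapDomain (Sum.inl : Fin d → Fin d ⊕ Fin d) a).support := by
        simpa [Finsupp.mem_support_iff] using hj
      rw [if_neg h1, if_neg hj]

theorem mdinl_cross_sub_inl (a : Fin d →₀ ℕ) (i j : Fin d) :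
    Finsupp.mapDomain (Sum.inl : Fin d → Fin d ⊕ Fin d) a + Finsupp.single (Sum.inr i) 1
        - Finsupp.single (Sum.inl j) 1
      = Finsupp.mapDomain Sum.inl (a - Finsupp.single j 1) + Finsupp.single (Sum.inr i) 1 := by
  ext s
  cases s with
  | inl k => simp [Finsupp.tsub_apply, Finsupp.single_apply, Sum.inl.injEq]
  | inr k => simp [Finsupp.tsub_apply, Finsupp.single_apply, Sum.inr.injEq]

theorem nat_sub_add_single (a : Fin d →₀ ℕ) (i j : Fin d) (hij : j ≠ i) :
    a - Finsupp.single j 1 + Finsupp.single i 1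
      = a + Finsupp.single i 1 - Finsupp.single j 1 := by
  ext k
  simp only [Finsupp.tsub_apply, Finsupp.add_apply, Finsupp.single_apply]
  split_ifs with h1 h2
  · exact absurd (h1.trans h2.symm) hij
  all_goals omega

theorem nat_sub_single_add (a : Fin d →₀ ℕ) (i : Fin d) (hi : a i ≠ 0) :
    a - Finsupp.single i 1 + Finsupp.single i 1 = a := by
  ext k
  rcases eq_or_ne i k with h | h
  · subst h
    have h1 : 1 ≤ a i := Nat.pos_of_ne_zero hi
    simp only [Finsupp.add_apply, Finsupp.tsub_apply, Finsupp.single_eq_same]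
    omega
  · simp [Finsupp.add_apply, Finsupp.tsub_apply, Finsupp.single_apply, if_neg h]

theorem coeff_psi_cross (P : MvPolynomial (Fin d) (ZMod p)) :
    ∀ (a : Fin d →₀ ℕ) (i : Fin d),
      coeff (Finsupp.mapDomain Sum.inl a + Finsupp.single (Sum.inr i) 1) (psi P)
        = ((a i + 1 : ℕ) : ZMod p) * coeff (a + Finsupp.single i 1) P := by
  classical
  induction P using MvPolynomial.induction_on with
  | C c =>
    intro a i
    rw [psi, aeval_C, algebraMap_eq, coeff_C, coeff_C]
    have h1 : ¬(0 : (Fin d ⊕ Fin d) →₀ ℕ)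
        = Finsupp.mapDomain Sum.inl a + Finsupp.single (Sum.inr i) 1 := by
      intro h
      have := congrArg (fun g => g (Sum.inr i)) h
      simp [Finsupp.add_apply] at this
    have h2 : ¬(0 : Fin d →₀ ℕ) = a + Finsupp.single i 1 := by
      intro h
      have := congrArg (fun g => g i) h
      simp [Finsupp.add_apply] at this
    rw [if_neg h1, if_neg h2, mul_zero]
  | add f g hf hg =>
    intro a i
    rw [psi, map_add, coeff_add, ← psi, ← psi, hf, hg, coeff_add, mul_add]
  | mul_X q j hq =>
    intro a i
    have M := Finsupp.mapDomain (Sum.inl : Fin d → Fin d ⊕ Fin d) a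
      + Finsupp.single (Sum.inr i) 1
    rw [psi_mul_X, coeff_add, coeff_mul_X', coeff_mul_X', coeff_mul_X']
    have hmemr : (Sum.inr j ∈ (Finsupp.mapDomain (Sum.inl : Fin d → Fin d ⊕ Fin d) a
        + Finsupp.single (Sum.inr i) 1).support) ↔ i = j := by
      simp [Finsupp.mem_support_iff, Finsupp.add_apply, Finsupp.single_apply]
    have hmeml : (Sum.inl j ∈ (Finsupp.mapDomain (Sum.inl : Fin d → Fin d ⊕ Fin d) a
        + Finsupp.single (Sum.inr i) 1).support) ↔ a j ≠ 0 := by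
      simp [Finsupp.mem_support_iff, Finsupp.add_apply, Finsupp.single_apply]
    have hmemq : (j ∈ (a + Finsupp.single i 1).support) ↔ (a j ≠ 0 ∨ j = i) := by
      simp only [Finsupp.mem_support_iff, Finsupp.add_apply, Finsupp.single_apply]
      rcases eq_or_ne i j with h | h
      · subst h; simp
      · simp [if_neg h, Ne.symm h]
    rcases eq_or_ne j i with hji | hji
    · subst hji
      rw [if_pos (hmemr.mpr rfl), add_tsub_cancel_right, coeff_psi_inl,
        if_pos (hmemq.mpr (Or.inr rfl)), add_tsub_cancel_right]
      by_cases hj : a j = 0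
      · rw [if_neg (fun hc => (hmeml.mp hc) hj), hj, zero_add]
        push_cast
        ring
      · rw [if_pos (hmeml.mpr hj), mdinl_cross_sub_inl, hq _ _, nat_sub_single_add a j hj]
        have hval : (a - Finsupp.single j 1 : Fin d →₀ ℕ) j = a j - 1 := by
          rw [Finsupp.tsub_apply, Finsupp.single_eq_same]
        rw [hval]
        have h2 : a j - 1 + 1 = a j := by
          have := Nat.pos_of_ne_zero hj; omega
        rw [h2]
        push_cast
        ring
    · rw [if_neg (fun hc => hji (hmemr.mp hc).symm), add_zero]
      by_cases hj : a j = 0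
      · rw [if_neg (fun hc => (hmeml.mp hc) hj),
          if_neg (fun hc => (hmemq.mp hc).elim (fun h' => h' hj) (fun h' => hji h')), mul_zero]
      · rw [if_pos (hmeml.mpr hj), mdinl_cross_sub_inl, hq _ _,
          if_pos (hmemq.mpr (Or.inl hj)), nat_sub_add_single a i j hji]
        have hval : (a - Finsupp.single j 1 : Fin d →₀ ℕ) i = a i := by
          simp [Finsupp.tsub_apply, Finsupp.single_apply, hji]
        rw [hval]

theorem degreeOf_psi_le (P : MvPolynomial (Fin d) (ZMod p))
    (hP : ∀ m ∈ P.support, ∀ i, m i ≤ p - 1) (s : Fin d ⊕ Fin d) :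
    degreeOf s (psi P) ≤ p - 1 := by
  classical
  have hrw : psi P = ∑ e ∈ P.support, psi (monomial e (coeff e P)) := by
    simp only [psi]
    rw [← map_sum, support_sum_monomial_coeff]
  rw [hrw]
  refine (degreeOf_sum_le _ _ _).trans (Finset.sup_le fun e he => ?_)
  have hmon : psi (monomial e (coeff e P))
      = C (coeff e P) * e.prod fun j k =>
          (X (Sum.inl j) + X (Sum.inr j) : MvPolynomial (Fin d ⊕ Fin d) (ZMod p)) ^ k := by
    rw [psi, aeval_monomial, algebraMap_eq]
  rw [hmon]
  refine (degreeOf_C_mul_le _ _ _).trans ?_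
  set i₀ : Fin d := Sum.elim id id s with hi₀
  refine (degreeOf_prod_le _ _ _).trans ?_
  have hterm : ∀ j ∈ e.support,
      degreeOf s ((X (Sum.inl j) + X (Sum.inr j) : MvPolynomial (Fin d ⊕ Fin d) (ZMod p)) ^ e j)
        ≤ if j = i₀ then p - 1 else 0 := by
    intro j _
    refine (degreeOf_pow_le _ _ _).trans ?_
    rcases eq_or_ne j i₀ with hj | hj
    · rw [if_pos hj]
      have h1 : degreeOf s (X (Sum.inl j) + X (Sum.inr j)
          : MvPolynomial (Fin d ⊕ Fin d) (ZMod p)) ≤ 1 := by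
        refine (degreeOf_add_le _ _ _).trans ?_
        rw [degreeOf_X, degreeOf_X]
        split_ifs <;> omega
      calc e j * degreeOf s (X (Sum.inl j) + X (Sum.inr j)
          : MvPolynomial (Fin d ⊕ Fin d) (ZMod p)) ≤ e j * 1 :=
            Nat.mul_le_mul_left _ h1
        _ = e j := mul_one _
        _ ≤ p - 1 := hP e he j
    · have h0 : degreeOf s (X (Sum.inl j) + X (Sum.inr j)
          : MvPolynomial (Fin d ⊕ Fin d) (ZMod p)) = 0 := by
        have hs1 : s ≠ Sum.inl j := by
          intro h; apply hj; rw [hi₀, h]; rfl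
        have hs2 : s ≠ Sum.inr j := by
          intro h; apply hj; rw [hi₀, h]; rfl
        have := degreeOf_add_le s (X (Sum.inl j) : MvPolynomial (Fin d ⊕ Fin d) (ZMod p))
          (X (Sum.inr j))
        rw [degreeOf_X, degreeOf_X, if_neg hs1, if_neg hs2] at this
        omega
      rw [h0, if_neg hj, Nat.mul_zero]
  refine (Finset.sum_le_sum hterm).trans ?_
  rw [Finset.sum_ite_eq' e.support i₀ fun _ => p - 1]
  split_ifs <;> omega

theorem degreeOf_rename_le (P : MvPolynomial (Fin d) (ZMod p))
    (hP : ∀ m ∈ P.support, ∀ i, m i ≤ p - 1) {f : Fin d → Fin d ⊕ Fin d}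
    (hf : Function.Injective f) (s : Fin d ⊕ Fin d) : degreeOf s (rename f P) ≤ p - 1 := by
  classical
  rw [degreeOf_le_iff]
  intro m hm
  obtain ⟨u, hum, hu⟩ := coeff_rename_ne_zero f P m (by rwa [← mem_support_iff])
  subst hum
  by_cases hs : ∃ k, f k = s
  · obtain ⟨k, rfl⟩ := hs
    rw [Finsupp.mapDomain_apply hf]
    exact hP u (mem_support_iff.mpr hu) k
  · rw [Finsupp.mapDomain_notin_range _ _ (by simpa using hs)]
    omega

end Stmt17Aux

/-- If `F` is a polynomial function on `F^d` such that
`(α, β) ↦ F(α+β) - F(α) - F(β)` has degree at most 2 as a polynomial function of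
the `2d` variables `(α, β)`, then `F` itself has degree at most 2. -/
theorem stmt_17 {p d : ℕ} [Fact p.Prime] (F : (Fin d → ZMod p) → ZMod p)
    (hF : ∃ P : MvPolynomial (Fin d) (ZMod p), ∀ x, MvPolynomial.eval x P = F x)
    (h : IsPolyDegLE (fun z : (Fin d ⊕ Fin d) → ZMod p =>
        F (fun i => z (Sum.inl i) + z (Sum.inr i)) -
          F (fun i => z (Sum.inl i)) - F (fun i => z (Sum.inr i))) 2) :
    IsPolyDegLE F 2 := by
  classical
  open MvPolynomial Stmt17Aux in
  obtain ⟨P₀, hP₀⟩ := hF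
  obtain ⟨Q₀, hQ₀deg, hQ₀ev⟩ := h
  set P : MvPolynomial (Fin d) (ZMod p) := reduceP P₀ with hPdef
  have hPF : ∀ x, MvPolynomial.eval x P = F x := fun x =>
    (eval_reduceP P₀ x).trans (hP₀ x)
  have hPred : ∀ m ∈ P.support, ∀ i, m i ≤ p - 1 := support_reduceP P₀
  refine ⟨P, ?_, hPF⟩
  by_contra hdeg
  push_neg at hdeg
  -- the reduced representative of the difference function
  set T := reduceP Q₀ with hTdef
  have hTdeg : T.totalDegree ≤ 2 := (totalDegree_reduceP_le Q₀).trans hQ₀deg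
  have hTred : ∀ m ∈ T.support, ∀ i, m i ≤ p - 1 := support_reduceP Q₀
  set S := psi P - rename Sum.inl P - rename Sum.inr P with hSdef
  have hSev : ∀ x, MvPolynomial.eval x S = MvPolynomial.eval x T := by
    intro x
    calc MvPolynomial.eval x S
        = F (fun i => x (Sum.inl i) + x (Sum.inr i)) -
            F (fun i => x (Sum.inl i)) - F (fun i => x (Sum.inr i)) := by
          rw [hSdef, map_sub, map_sub, eval_psi, eval_rename, eval_rename, hPF]
          have h2 := hPF (x ∘ Sum.inl)
          have h3 := hPF (x ∘ Sum.inr)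
          rw [h2, h3]
          rfl
      _ = MvPolynomial.eval x Q₀ := (hQ₀ev x).symm
      _ = MvPolynomial.eval x T := (eval_reduceP Q₀ x).symm
  have hS_red : ∀ s, degreeOf s S ≤ p - 1 := by
    intro s
    rw [hSdef]
    refine (degreeOf_sub_le _ _ _).trans (max_le ((degreeOf_sub_le _ _ _).trans (max_le ?_ ?_)) ?_)
    · exact degreeOf_psi_le P hPred s
    · exact degreeOf_rename_le P hPred Sum.inl_injective s
    · exact degreeOf_rename_le P hPred Sum.inr_injective s
  have hST0 : S - T = 0 := by
    apply MvPolynomial.eq_zero_of_eval_eq_zero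
    · intro v
      rw [map_sub, hSev v, sub_self]
    · rw [MvPolynomial.mem_restrictDegree]
      intro m hm i
      have h5 : degreeOf i (S - T) ≤ p - 1 := by
        refine (degreeOf_sub_le _ _ _).trans (max_le (hS_red i) ?_)
        exact degreeOf_le_iff.mpr fun m' hm' => hTred m' hm' i
      have h6 := degreeOf_le_iff.mp h5 m hm
      rwa [ZMod.card]
  have hSeqT : S = T := sub_eq_zero.mp hST0
  -- pick a top-degree monomial of P
  have hPne : P ≠ 0 := by
    intro h0
    rw [h0, MvPolynomial.totalDegree_zero] at hdeg
    omega
  obtain ⟨e, he, heD⟩ := P.support.exists_mem_eq_sup (support_nonempty.mpr hPne)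
    (fun m => m.sum fun _ n => n)
  have hDsum : 3 ≤ e.sum fun _ n => n := by
    have : P.totalDegree = e.sum fun _ n => n := heD
    omega
  have hene : e ≠ 0 := by
    intro h0
    rw [h0] at hDsum
    simp at hDsum
  obtain ⟨i, hi'⟩ := Finsupp.support_nonempty_iff.mpr hene
  have hi : e i ≠ 0 := Finsupp.mem_support_iff.mp hi'
  set a : Fin d →₀ ℕ := e - Finsupp.single i 1 with hadef
  have hae : a + Finsupp.single i 1 = e := nat_sub_single_add e i hi
  set M : (Fin d ⊕ Fin d) →₀ ℕ :=
    Finsupp.mapDomain Sum.inl a + Finsupp.single (Sum.inr i) 1 with hMdef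
  have hasum : (a.sum fun _ n => n) + 1 = e.sum fun _ n => n := by
    conv_rhs => rw [← hae]
    rw [Finsupp.sum_add_index' (fun _ => rfl) (fun _ _ _ => rfl),
      Finsupp.sum_single_index rfl]
  have hane : a ≠ 0 := by
    intro h0
    rw [h0] at hasum
    have hz : ((0 : Fin d →₀ ℕ).sum fun _ n => n) = 0 := rfl
    omega
  obtain ⟨j₀, hj₀'⟩ := Finsupp.support_nonempty_iff.mpr hane
  have hj₀ : a j₀ ≠ 0 := Finsupp.mem_support_iff.mp hj₀'
  have hz1 : MvPolynomial.coeff M (rename Sum.inl P) = 0 := by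
    by_contra hc
    obtain ⟨u, hum, _⟩ := coeff_rename_ne_zero _ _ _ hc
    have := congrArg (fun g => g (Sum.inr i)) hum
    simp [hMdef, Finsupp.add_apply, Finsupp.single_eq_same] at this
  have hz2 : MvPolynomial.coeff M (rename Sum.inr P) = 0 := by
    by_contra hc
    obtain ⟨u, hum, _⟩ := coeff_rename_ne_zero _ _ _ hc
    have := congrArg (fun g => g (Sum.inl j₀)) hum
    simp [hMdef, Finsupp.add_apply, Finsupp.single_apply] at this
    exact hj₀ this.symm
  have hMcoeffS : MvPolynomial.coeff M S = ((a i + 1 : ℕ) : ZMod p) * MvPolynomial.coeff e P := by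
    rw [hSdef, MvPolynomial.coeff_sub, MvPolynomial.coeff_sub, hz1, hz2, sub_zero, sub_zero,
      hMdef, coeff_psi_cross, hae]
  have hMsum : (M.sum fun _ n => n) = (a.sum fun _ n => n) + 1 := by
    rw [hMdef, Finsupp.sum_add_index' (fun _ => rfl) (fun _ _ _ => rfl),
      Finsupp.sum_single_index rfl,
      Finsupp.sum_mapDomain_index (fun _ => rfl) (fun _ _ _ => rfl)]
  have hMT : MvPolynomial.coeff M T = 0 := by
    apply MvPolynomial.coeff_eq_zero_of_totalDegree_lt
    have h8 : (∑ s ∈ M.support, M s) = M.sum fun _ n => n := rfl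
    rw [h8, hMsum]
    omega
  have hne : MvPolynomial.coeff M S ≠ 0 := by
    rw [hMcoeffS]
    apply mul_ne_zero
    · have hei : a i + 1 = e i := by
        have h7 : (a + Finsupp.single i 1 : Fin d →₀ ℕ) i = e i := by rw [hae]
        simpa [Finsupp.add_apply, Finsupp.single_eq_same] using h7
      rw [hei]
      intro hc
      rw [ZMod.natCast_eq_zero_iff] at hc
      have h1 : e i ≤ p - 1 := hPred e he i
      have h2 : 0 < e i := Nat.pos_of_ne_zero hi
      have h3 := Nat.le_of_dvd h2 hc
      have hp2 := (Fact.out : p.Prime).two_le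
      omega
    · exact MvPolynomial.mem_support_iff.mp he
  rw [hSeqT, hMT] at hne
  exact hne rfl
end
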